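/- arXiv:2206.12153 — 5 statements merged into one kernel-verified Lean document; each statement's English description precedes it below -/
import Mathlib

section
/- Foata's correspondence is a bijection: the map sending a permutation π ∈ S_n in standard cycle notation (each cycle written with its largest element first, cycles listed in increasing order of their first elements) to the permutation obtained by erasing the cycle brackets (concatenating the cycles into one-line notation) is a bijection from S_n to S_n. -/
/-- The cycle of `π` containing `x`, written starting at `x`:
`[x, π x, π² x, ..., π^{l-1} x]` where `l` is the length of the cycle. -/
noncomputable def cycleWord {n : ℕ} (π : Equiv.Perm (Fin n)) (x : Fin n) : List (Fin n) :=
  (List.range (Function.minimalPeriod π x)).map (fun j => (⇑π)^[j] x)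

/-- The Foata word of `π`: write `π` in standard cycle notation (each cycle starting
with its largest element, cycles listed in increasing order of their first elements)
and erase the brackets. -/
noncomputable def foataWord {n : ℕ} (π : Equiv.Perm (Fin n)) : List (Fin n) :=
  (((Finset.univ.filter
      (fun x : Fin n => ∀ j : Fin n, (⇑π)^[j.val] x ≤ x))).sort (· ≤ ·)).flatMap
    (cycleWord π)

namespace FoataAux

open Function Equiv List

variable {n : ℕ}

lemma mem_pp (π : Equiv.Perm (Fin n)) (x : Fin n) : x ∈ Function.periodicPts ⇑π :=
  ⟨orderOf π, orderOf_pos π, by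
    show (⇑π)^[orderOf π] x = x
    rw [Equiv.Perm.iterate_eq_pow, pow_orderOf_eq_one]; rfl⟩

lemma p_pos (π : Equiv.Perm (Fin n)) (x : Fin n) : 0 < Function.minimalPeriod ⇑π x :=
  Function.minimalPeriod_pos_of_mem_periodicPts (mem_pp π x)

lemma length_cycleWord (π : Equiv.Perm (Fin n)) (x : Fin n) :
    (cycleWord π x).length = Function.minimalPeriod ⇑π x := by
  simp [cycleWord]

lemma cycleWord_getElem (π : Equiv.Perm (Fin n)) (x : Fin n) (j : ℕ)
    (hj : j < (cycleWord π x).length) : (cycleWord π x)[j] = (⇑π)^[j] x := by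
  simp [cycleWord]

lemma cycleWord_nodup (π : Equiv.Perm (Fin n)) (x : Fin n) : (cycleWord π x).Nodup := by
  refine List.Nodup.map_on ?_ List.nodup_range
  intro a ha b hb h
  exact Function.iterate_injOn_Iio_minimalPeriod (by simpa using ha) (by simpa using hb) h

lemma mem_cycleWord_iff {π : Equiv.Perm (Fin n)} {x y : Fin n} :
    y ∈ cycleWord π x ↔ π.SameCycle x y := by
  constructor
  · intro hy
    simp only [cycleWord, List.mem_map, List.mem_range] at hy
    obtain ⟨j, _, rfl⟩ := hy
    exact ⟨(j : ℤ), by rw [zpow_natCast]; rfl⟩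
  · intro h
    obtain ⟨i, _, rfl⟩ := h.exists_pow_eq'
    simp only [cycleWord, List.mem_map, List.mem_range]
    refine ⟨i % Function.minimalPeriod ⇑π x, Nat.mod_lt _ (p_pos π x), ?_⟩
    rw [Function.iterate_mod_minimalPeriod_eq]; rfl

lemma self_mem_cycleWord (π : Equiv.Perm (Fin n)) (x : Fin n) : x ∈ cycleWord π x :=
  mem_cycleWord_iff.2 (Equiv.Perm.SameCycle.refl π x)

lemma cycleWord_cons (π : Equiv.Perm (Fin n)) (x : Fin n) :
    ∃ t, cycleWord π x = x :: t := by
  obtain ⟨k, hk⟩ : ∃ k, Function.minimalPeriod ⇑π x = k + 1 :=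
    ⟨Function.minimalPeriod ⇑π x - 1, (Nat.succ_pred_eq_of_pos (p_pos π x)).symm⟩
  refine ⟨(List.range k).map fun j => (⇑π)^[j + 1] x, ?_⟩
  rw [cycleWord, hk, List.range_succ_eq_map, List.map_cons, List.map_map]
  rfl

lemma period_le (π : Equiv.Perm (Fin n)) (x : Fin n) : Function.minimalPeriod ⇑π x ≤ n := by
  have := (cycleWord_nodup π x).length_le_card
  simpa [length_cycleWord] using this

lemma mem_maxSet_iff {π : Equiv.Perm (Fin n)} {x : Fin n} :
    (∀ j : Fin n, (⇑π)^[j.val] x ≤ x) ↔ ∀ y, π.SameCycle x y → y ≤ x := by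
  constructor
  · intro h y hy
    rw [← mem_cycleWord_iff] at hy
    simp only [cycleWord, List.mem_map, List.mem_range] at hy
    obtain ⟨j, hj, rfl⟩ := hy
    exact h ⟨j, lt_of_lt_of_le hj (period_le π x)⟩
  · intro h j
    exact h _ ⟨(j.val : ℤ), by rw [zpow_natCast]; rfl⟩

lemma exists_max (π : Equiv.Perm (Fin n)) (x : Fin n) :
    ∃ m, π.SameCycle m x ∧ ∀ y, π.SameCycle m y → y ≤ m := by
  classical
  set S := Finset.univ.filter (fun y => π.SameCycle x y) with hS
  have hxS : x ∈ S := by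
    simp only [hS, Finset.mem_filter]
    exact ⟨Finset.mem_univ x, Equiv.Perm.SameCycle.refl π x⟩
  have hm : π.SameCycle x (S.max' ⟨x, hxS⟩) := by
    have := S.max'_mem ⟨x, hxS⟩
    simp only [hS, Finset.mem_filter] at this
    exact this.2
  refine ⟨S.max' ⟨x, hxS⟩, hm.symm, ?_⟩
  intro y hy
  exact S.le_max' y (by simp [hS, hm.trans hy])

lemma foata_nodup (π : Equiv.Perm (Fin n)) : (foataWord π).Nodup := by
  rw [foataWord]
  refine List.nodup_flatMap.2 ⟨fun m _ => cycleWord_nodup π m, ?_⟩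
  have hs := (Finset.sortedLT_sort (Finset.univ.filter
      (fun x : Fin n => ∀ j : Fin n, (⇑π)^[j.val] x ≤ x))).pairwise
  refine List.Pairwise.imp_of_mem ?_ hs
  intro a b ha hb hab
  rw [Finset.mem_sort, Finset.mem_filter] at ha hb
  intro y h1 h2
  rw [mem_cycleWord_iff] at h1 h2
  have hba : b ≤ a := (mem_maxSet_iff.1 ha.2) b (h1.trans h2.symm)
  exact absurd hba (not_le.2 hab)

lemma foata_mem (π : Equiv.Perm (Fin n)) (x : Fin n) : x ∈ foataWord π := by
  obtain ⟨m, hmx, hmax⟩ := exists_max π x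
  rw [foataWord]
  refine List.mem_flatMap.2 ⟨m, ?_, mem_cycleWord_iff.2 hmx⟩
  rw [Finset.mem_sort, Finset.mem_filter]
  exact ⟨Finset.mem_univ m, mem_maxSet_iff.2 hmax⟩

lemma foata_length (π : Equiv.Perm (Fin n)) : (foataWord π).length = n := by
  have h1 : (foataWord π).toFinset = Finset.univ :=
    Finset.eq_univ_iff_forall.2 fun x => List.mem_toFinset.2 (foata_mem π x)
  have h2 := List.toFinset_card_of_nodup (foata_nodup π)
  rw [h1] at h2
  simpa using h2.symm

lemma takeWhile_append' {α} (p : α → Bool) :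
    ∀ (l r : List α), (∀ a ∈ l, p a = true) → (∀ b ∈ r.head?, p b = false) →
      (l ++ r).takeWhile p = l
  | [], r, _, h2 => by
    cases r with
    | nil => rfl
    | cons b rb =>
      simp only [List.nil_append]
      rw [List.takeWhile_cons_of_neg]
      simpa using h2 b rfl
  | a :: l, r, h1, h2 => by
    rw [List.cons_append, List.takeWhile_cons_of_pos (by simpa using h1 a (.head _)),
      takeWhile_append' p l r (fun a ha => h1 a (.tail _ ha)) h2]

lemma rec_aux (π π' : Equiv.Perm (Fin n)) :
    ∀ (M M' : List (Fin n)), M.Pairwise (· < ·) → M'.Pairwise (· < ·) →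
      (∀ m ∈ M, ∀ y, π.SameCycle m y → y ≤ m) →
      (∀ m ∈ M', ∀ y, π'.SameCycle m y → y ≤ m) →
      M.flatMap (cycleWord π) = M'.flatMap (cycleWord π') →
      M = M' ∧ ∀ m ∈ M, cycleWord π m = cycleWord π' m
  | [], [], _, _, _, _, _ => ⟨rfl, by simp⟩
  | [], m' :: Ms', _, _, _, _, h => by
    exfalso
    simp only [List.flatMap_nil, List.flatMap_cons] at h
    have : m' ∈ ([] : List (Fin n)) := by
      rw [h]; exact List.mem_append_left _ (self_mem_cycleWord π' m')
    simp at this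
  | m :: Ms, [], _, _, _, _, h => by
    exfalso
    simp only [List.flatMap_nil, List.flatMap_cons] at h
    have : m ∈ ([] : List (Fin n)) := by
      rw [← h]; exact List.mem_append_left _ (self_mem_cycleWord π m)
    simp at this
  | m :: Ms, m' :: Ms', hM, hM', hmax, hmax', h => by
    obtain ⟨t, ht⟩ := cycleWord_cons π m
    obtain ⟨t', ht'⟩ := cycleWord_cons π' m'
    rw [List.flatMap_cons, List.flatMap_cons, ht, ht', List.cons_append, List.cons_append]
      at h
    obtain ⟨hmm, htail⟩ := List.cons_eq_cons.1 h
    subst hmm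
    have hlt : ∀ (σ : Equiv.Perm (Fin n)) (s : List (Fin n)),
        cycleWord σ m = m :: s → (∀ y, σ.SameCycle m y → y ≤ m) → ∀ a ∈ s, a < m := by
      intro σ s hs hmx a ha
      have ha' : a ∈ cycleWord σ m := by rw [hs]; exact List.mem_cons_of_mem _ ha
      have h1 : a ≤ m := hmx a (mem_cycleWord_iff.1 ha')
      have h2 : a ≠ m := by
        have hnd := cycleWord_nodup σ m
        rw [hs, List.nodup_cons] at hnd
        intro heq; exact hnd.1 (heq ▸ ha)
      exact lt_of_le_of_ne h1 h2
    have hrest : ∀ (σ : Equiv.Perm (Fin n)) (L : List (Fin n)), (∀ c ∈ L, m < c) →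
        ∀ b ∈ (L.flatMap (cycleWord σ)).head?, (decide (b < m)) = false := by
      intro σ L hL b hb
      cases L with
      | nil => simp at hb
      | cons c L' =>
        obtain ⟨s, hs⟩ := cycleWord_cons σ c
        rw [List.flatMap_cons, hs, List.cons_append, List.head?_cons] at hb
        simp only [Option.mem_def, Option.some.injEq] at hb
        subst hb
        exact decide_eq_false (not_lt.2 (le_of_lt (hL _ (List.mem_cons_self))))
    have e1 : ((t ++ Ms.flatMap (cycleWord π)).takeWhile fun y => decide (y < m)) = t :=
      takeWhile_append' _ _ _
        (fun a ha => decide_eq_true (hlt π t ht (hmax m (List.mem_cons_self)) a ha))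
        (hrest π Ms (List.pairwise_cons.1 hM).1)
    have e2 : ((t' ++ Ms'.flatMap (cycleWord π')).takeWhile fun y => decide (y < m)) = t' :=
      takeWhile_append' _ _ _
        (fun a ha => decide_eq_true (hlt π' t' ht' (hmax' m (List.mem_cons_self)) a ha))
        (hrest π' Ms' (List.pairwise_cons.1 hM').1)
    have hkey : t = t' := by rw [← e1, htail, e2]
    have hA : Ms.flatMap (cycleWord π) = Ms'.flatMap (cycleWord π') := by
      have h3 := htail
      rw [hkey] at h3
      exact List.append_cancel_left h3
    obtain ⟨hMeq, hcw⟩ := rec_aux π π' Ms Ms' (List.pairwise_cons.1 hM).2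
      (List.pairwise_cons.1 hM').2 (fun x hx => hmax x (List.mem_cons_of_mem _ hx))
      (fun x hx => hmax' x (List.mem_cons_of_mem _ hx)) hA
    refine ⟨by rw [hMeq], ?_⟩
    intro x hx
    rcases List.mem_cons.1 hx with rfl | hx
    · rw [ht, ht', hkey]
    · exact hcw x hx

lemma agree {π π' : Equiv.Perm (Fin n)} {m x : Fin n}
    (hc : cycleWord π m = cycleWord π' m) (hx : x ∈ cycleWord π m) : π x = π' x := by
  have hp : Function.minimalPeriod ⇑π m = Function.minimalPeriod ⇑π' m := by
    have := congrArg List.length hc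
    rwa [length_cycleWord, length_cycleWord] at this
  have hpt : ∀ k, k < Function.minimalPeriod ⇑π m → (⇑π)^[k] m = (⇑π')^[k] m := by
    intro k hk
    have h1 : (cycleWord π m)[k]? = (cycleWord π' m)[k]? := by rw [hc]
    rw [List.getElem?_eq_getElem (by rw [length_cycleWord]; exact hk),
        List.getElem?_eq_getElem (by rw [length_cycleWord, ← hp]; exact hk)] at h1
    have h2 := Option.some.inj h1
    rwa [cycleWord_getElem, cycleWord_getElem] at h2
  simp only [cycleWord, List.mem_map, List.mem_range] at hx
  obtain ⟨j, hj, rfl⟩ := hx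
  have p1 : π ((⇑π)^[j] m) = (⇑π)^[(j + 1) % Function.minimalPeriod ⇑π m] m := by
    rw [Function.iterate_mod_minimalPeriod_eq, Function.iterate_succ_apply']
  have p2 : π' ((⇑π)^[j] m) = (⇑π')^[(j + 1) % Function.minimalPeriod ⇑π' m] m := by
    rw [hpt j hj, Function.iterate_mod_minimalPeriod_eq, Function.iterate_succ_apply']
  rw [p1, p2, ← hp, hpt _ (Nat.mod_lt _ (p_pos π m))]

lemma foata_inj {π π' : Equiv.Perm (Fin n)} (h : foataWord π = foataWord π') : π = π' := by
  have hmax : ∀ m ∈ ((Finset.univ.filter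
      (fun x : Fin n => ∀ j : Fin n, (⇑π)^[j.val] x ≤ x))).sort (· ≤ ·),
      ∀ y, π.SameCycle m y → y ≤ m := by
    intro m hm
    rw [Finset.mem_sort, Finset.mem_filter] at hm
    exact mem_maxSet_iff.1 hm.2
  have hmax' : ∀ m ∈ ((Finset.univ.filter
      (fun x : Fin n => ∀ j : Fin n, (⇑π')^[j.val] x ≤ x))).sort (· ≤ ·),
      ∀ y, π'.SameCycle m y → y ≤ m := by
    intro m hm
    rw [Finset.mem_sort, Finset.mem_filter] at hm
    exact mem_maxSet_iff.1 hm.2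
  rw [foataWord, foataWord] at h
  obtain ⟨hM, hcw⟩ := rec_aux π π' _ _ (Finset.sortedLT_sort _).pairwise (Finset.sortedLT_sort _).pairwise
    hmax hmax' h
  apply Equiv.ext
  intro x
  have hx := foata_mem π x
  rw [foataWord] at hx
  obtain ⟨m, hm, hxm⟩ := List.mem_flatMap.1 hx
  exact agree (hcw m hm) hxm

end FoataAux

/-- Foata's correspondence is a bijection from `S_n` to `S_n`: every
permutation `τ` (given by its one-line notation `[τ 0, ..., τ (n-1)]`) is the
bracket-erased standard cycle notation of exactly one permutation `π`. -/
theorem foata_bijective (n : ℕ) (τ : Equiv.Perm (Fin n)) :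
    ∃! π : Equiv.Perm (Fin n), foataWord π = List.ofFn ⇑τ := by
  classical
  set Φ : Equiv.Perm (Fin n) → Equiv.Perm (Fin n) := fun π =>
    (finCongr (FoataAux.foata_length π).symm).trans
      ((FoataAux.foata_nodup π).getEquivOfForallMemList _ (FoataAux.foata_mem π)) with hΦ
  have key : ∀ π : Equiv.Perm (Fin n), foataWord π = List.ofFn ⇑(Φ π) := by
    intro π
    apply List.ext_getElem (by simp [FoataAux.foata_length])
    intro i h1 h2
    simp [hΦ, List.Nodup.getEquivOfForallMemList]
  have hinj : Function.Injective Φ := by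
    intro a b hab
    exact FoataAux.foata_inj (by rw [key a, key b, hab])
  obtain ⟨π, hπ⟩ := (Finite.injective_iff_surjective.mp hinj) τ
  refine ⟨π, ?_, ?_⟩
  · show foataWord π = List.ofFn ⇑τ
    rw [key π, hπ]
  intro π₁ h₁
  apply FoataAux.foata_inj
  rw [h₁, ← hπ, ← key π]
end

section
/- Under Foata's correspondence, the number of cycles of π equals the number of left-to-right maxima (increasing records) in the one-line notation of the image permutation. -/
/-- The number of cycles of `π`, fixed points counted as cycles of length one. -/
def numCycles {n : ℕ} (π : Equiv.Perm (Fin n)) : ℕ :=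
  π.cycleType.card + (Finset.univ.filter fun x => π x = x).card

/-- The number of left-to-right maxima (increasing records) of a word. -/
def lrMaxCount {n : ℕ} (w : List (Fin n)) : ℕ :=
  ((Finset.univ : Finset (Fin w.length)).filter
    (fun i => ∀ j : Fin w.length, j < i → w.get j < w.get i)).card


open Finset

variable {n : ℕ}

/-- Threshold-combining. -/
def thrM {α : Type*} [LinearOrder α] (m : Option α) (a : α) : α := m.elim a (fun b => max b a)

open scoped Classical in
/-- Count of records above a threshold. -/
noncomputable def cnt {α : Type*} [LinearOrder α] (m : Option α) (w : List α) : ℕ :=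
  ((Finset.univ : Finset (Fin w.length)).filter
    (fun i => (∀ b ∈ m, b < w.get i) ∧ ∀ j : Fin w.length, j < i → w.get j < w.get i)).card

lemma lrMaxCount_eq_cnt (w : List (Fin n)) :
    ((Finset.univ : Finset (Fin w.length)).filter
      (fun i => ∀ j : Fin w.length, j < i → w.get j < w.get i)).card = cnt none w := by
  unfold cnt
  congr 1
  ext i
  simp

lemma cnt_nil {α : Type*} [LinearOrder α] (m : Option α) : cnt m ([] : List α) = 0 := by
  simp [cnt]

lemma cnt_cons {α : Type*} [LinearOrder α] (m : Option α) (a : α) (w : List α) :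
    cnt m (a :: w) = (if ∀ b ∈ m, b < a then 1 else 0) + cnt (some (thrM m a)) w := by
  classical
  unfold cnt
  have key := Fin.sum_univ_succ (n := w.length)
    (f := fun i : Fin ((a :: w).length) =>
      if ((∀ b ∈ m, b < (a :: w).get i) ∧ ∀ j, j < i → (a :: w).get j < (a :: w).get i)
      then (1 : ℕ) else 0)
  rw [Finset.card_filter, Finset.card_filter]
  refine key.trans ?_
  congr 1
  · congr 1
    apply propext
    constructor
    · rintro ⟨h, -⟩; exact h
    · intro h
      exact ⟨h, fun j hj => absurd hj (Fin.not_lt_zero j)⟩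
  · apply Finset.sum_congr rfl
    intro i _
    congr 1
    apply propext
    have hgs : ∀ j : Fin w.length, (a :: w).get j.succ = w.get j := fun j => rfl
    have hg0 : (a :: w).get (0 : Fin (w.length + 1)) = a := rfl
    constructor
    · rintro ⟨h1, h2⟩
      have ha : a < w.get i := by
        have := h2 (0 : Fin (w.length + 1)) (Fin.succ_pos i)
        rwa [hg0, hgs] at this
      refine ⟨?_, fun j hj => ?_⟩
      · intro b hb
        rw [Option.mem_def, Option.some.injEq] at hb
        subst hb
        cases m with
        | none => exact ha
        | some c =>
          have hc : c < w.get i := by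
            have := h1 c rfl
            rwa [hgs] at this
          exact max_lt hc ha
      · have := h2 j.succ (Fin.succ_lt_succ_iff.mpr hj)
        rwa [hgs, hgs] at this
    · rintro ⟨h1, h2⟩
      have hth : thrM m a < w.get i := h1 _ rfl
      have ha : a < w.get i := by
        cases m with
        | none => exact hth
        | some c => exact (max_lt_iff.mp hth).2
      refine ⟨?_, ?_⟩
      · intro b hb
        rw [Option.mem_def] at hb
        cases m with
        | none => exact absurd hb (by simp)
        | some c =>
          rw [Option.some.injEq] at hb
          subst hb
          rw [hgs]
          exact (max_lt_iff.mp hth).1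
      · refine Fin.cases ?_ ?_
        · intro _
          rw [hg0, hgs]
          exact ha
        · intro k hk
          have hki : k < i := Fin.succ_lt_succ_iff.mp hk
          rw [hgs, hgs]
          exact h2 k hki

lemma thrM_eq_of_le {α : Type*} [LinearOrder α] (m : Option α) (h : α)
    (hm : ∀ b ∈ m, b ≤ h) : thrM m h = h := by
  cases m with
  | none => rfl
  | some c =>
    show max c h = h
    exact max_eq_right (hm c rfl)

lemma cnt_append_small {α : Type*} [LinearOrder α] (h : α) (t w : List α)
    (ht : ∀ y ∈ t, y < h) : cnt (some h) (t ++ w) = cnt (some h) w := by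
  induction t with
  | nil => rfl
  | cons y t ih =>
    have hy : y < h := ht y (List.mem_cons_self)
    rw [List.cons_append, cnt_cons]
    have h1 : ¬ (∀ b ∈ some h, b < y) := by
      intro hcon
      exact absurd (hcon h rfl) (not_lt.mpr hy.le)
    rw [if_neg h1]
    have h2 : thrM (some h) y = h := max_eq_left hy.le
    rw [h2, ih (fun z hz => ht z (List.mem_cons_of_mem y hz))]
    exact Nat.zero_add _

lemma cnt_block {α : Type*} [LinearOrder α] (m : Option α) (h : α) (t w : List α)
    (hm : ∀ b ∈ m, b < h) (ht : ∀ y ∈ t, y < h) :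
    cnt m ((h :: t) ++ w) = 1 + cnt (some h) w := by
  rw [List.cons_append, cnt_cons, if_pos hm, thrM_eq_of_le m h (fun b hb => (hm b hb).le),
    cnt_append_small h t w ht]

lemma cnt_flatMap {α : Type*} [LinearOrder α] (L : List α) (g : α → List α) (m : Option α)
    (hL : L.Pairwise (· < ·))
    (hm : ∀ b ∈ m, ∀ x ∈ L, b < x)
    (hg : ∀ x ∈ L, ∃ t, g x = x :: t ∧ ∀ y ∈ t, y < x) :
    cnt m (L.flatMap g) = L.length := by
  induction L generalizing m with
  | nil =>
    rw [List.flatMap_nil]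
    exact cnt_nil m
  | cons x L ih =>
    obtain ⟨t, hgx, hty⟩ := hg x (List.mem_cons_self)
    rw [List.flatMap_cons, hgx,
      cnt_block m x t _ (fun b hb => hm b hb x (List.mem_cons_self)) hty]
    rw [ih (some x) (List.Pairwise.of_cons hL)
      (fun b hb y hy => by
        rw [Option.mem_def, Option.some.injEq] at hb; subst hb
        exact (List.pairwise_cons.mp hL).1 y hy)
      (fun y hy => hg y (List.mem_cons_of_mem x hy))]
    simp [Nat.add_comm]

lemma orbit_le (π : Equiv.Perm (Fin n)) (x : Fin n)
    (hx : ∀ j : Fin n, (⇑π)^[j.val] x ≤ x) : ∀ j : ℕ, (⇑π)^[j] x ≤ x := by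
  intro j
  have hper : x ∈ Function.periodicPts ⇑π := by
    refine ⟨orderOf π, orderOf_pos π, ?_⟩
    show (⇑π)^[orderOf π] x = x
    rw [Equiv.Perm.iterate_eq_pow, pow_orderOf_eq_one]
    rfl
  set T := Function.minimalPeriod ⇑π x with hT
  have hTpos : 0 < T := Function.minimalPeriod_pos_of_mem_periodicPts hper
  have hTle : T ≤ n := by
    have hinj : Function.Injective (fun j : Fin T => (⇑π)^[j.val] x) := by
      intro a b hab
      have := Function.iterate_injOn_Iio_minimalPeriod (f := ⇑π) (x := x)
        (Set.mem_Iio.mpr a.isLt) (Set.mem_Iio.mpr b.isLt) hab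
      exact Fin.ext this
    simpa using Fintype.card_le_of_injective _ hinj
  have hmod : (⇑π)^[j % T] x = (⇑π)^[j] x := Function.iterate_mod_minimalPeriod_eq
  rw [← hmod]
  exact hx ⟨j % T, lt_of_lt_of_le (Nat.mod_lt j hTpos) hTle⟩

lemma cycleWord_spec (π : Equiv.Perm (Fin n)) (x : Fin n)
    (hx : ∀ j : Fin n, (⇑π)^[j.val] x ≤ x) :
    ∃ t, cycleWord π x = x :: t ∧ ∀ y ∈ t, y < x := by
  have hper : x ∈ Function.periodicPts ⇑π := by
    refine ⟨orderOf π, orderOf_pos π, ?_⟩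
    show (⇑π)^[orderOf π] x = x
    rw [Equiv.Perm.iterate_eq_pow, pow_orderOf_eq_one]
    rfl
  set T := Function.minimalPeriod ⇑π x with hT
  have hTpos : 0 < T := Function.minimalPeriod_pos_of_mem_periodicPts hper
  obtain ⟨T', hT'⟩ := Nat.exists_eq_succ_of_ne_zero hTpos.ne'
  refine ⟨(List.range T').map (fun j => (⇑π)^[j + 1] x), ?_, ?_⟩
  · rw [cycleWord, ← hT, hT', List.range_succ_eq_map, List.map_cons, List.map_map]
    rfl
  · intro y hy
    simp only [List.mem_map, List.mem_range] at hy
    obtain ⟨j, hj, rfl⟩ := hy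
    have hle : (⇑π)^[j + 1] x ≤ x := orbit_le π x hx (j + 1)
    refine lt_of_le_of_ne hle ?_
    intro heq
    have : T ≤ j + 1 :=
      Function.IsPeriodicPt.minimalPeriod_le (Nat.succ_pos j) heq
    omega

lemma card_S (π : Equiv.Perm (Fin n)) :
    numCycles π =
      (Finset.univ.filter (fun x : Fin n => ∀ j : Fin n, (⇑π)^[j.val] x ≤ x)).card := by
  classical
  set S := Finset.univ.filter (fun x : Fin n => ∀ j : Fin n, (⇑π)^[j.val] x ≤ x) with hS
  have hsplit : (S.filter (fun x => π x = x)).card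
      + (S.filter (fun x => ¬ π x = x)).card = S.card :=
    Finset.card_filter_add_card_filter_not _
  have hfix : S.filter (fun x => π x = x) = Finset.univ.filter (fun x => π x = x) := by
    ext z
    simp only [hS, Finset.mem_filter, Finset.mem_univ, true_and]
    constructor
    · rintro ⟨-, h⟩; exact h
    · intro h
      exact ⟨fun j => le_of_eq (Function.iterate_fixed h j.val), h⟩
  have hnonfix : (S.filter (fun x => ¬ π x = x)).card = π.cycleFactorsFinset.card := by
    refine Finset.card_bij (fun x _ => π.cycleOf x) ?_ ?_ ?_
    · intro x hx
      rw [Finset.mem_filter] at hx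
      exact Equiv.Perm.cycleOf_mem_cycleFactorsFinset_iff.mpr
        (Equiv.Perm.mem_support.mpr hx.2)
    · intro x hx y hy hxy
      rw [Finset.mem_filter, hS, Finset.mem_filter] at hx hy
      have hysupp : y ∈ (π.cycleOf y).support :=
        (Equiv.Perm.mem_support_cycleOf_iff).mpr
          ⟨Equiv.Perm.SameCycle.refl _ _, Equiv.Perm.mem_support.mpr hy.2⟩
      have hxy' : π.cycleOf x = π.cycleOf y := hxy
      rw [← hxy'] at hysupp
      have hsame : π.SameCycle x y := ((Equiv.Perm.mem_support_cycleOf_iff).mp hysupp).1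
      obtain ⟨i, -, hi⟩ := hsame.exists_pow_eq'
      obtain ⟨k, -, hk⟩ := hsame.symm.exists_pow_eq'
      have h1 : y ≤ x := by
        rw [← hi]
        exact orbit_le π x hx.1.2 i
      have h2 : x ≤ y := by
        rw [← hk]
        exact orbit_le π y hy.1.2 k
      exact le_antisymm h2 h1
    · intro c hc
      have hcc := Equiv.Perm.mem_cycleFactorsFinset_iff.mp hc
      have hne : c.support.Nonempty := by
        rw [Finset.nonempty_iff_ne_empty, Ne, Equiv.Perm.support_eq_empty_iff]
        exact hcc.1.ne_one
      set x := c.support.max' hne with hxdef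
      have hxsupp : x ∈ c.support := c.support.max'_mem hne
      have horb : ∀ j : ℕ, (⇑π)^[j] x ∈ c.support := by
        intro j
        induction j with
        | zero => exact hxsupp
        | succ k ihk =>
          rw [Function.iterate_succ_apply']
          rw [← hcc.2 _ ihk]
          exact Equiv.Perm.apply_mem_support.mpr ihk
      have hxS : ∀ j : Fin n, (⇑π)^[j.val] x ≤ x :=
        fun j => c.support.le_max' _ (horb j.val)
      have hxne : ¬ π x = x := by
        rw [← hcc.2 x hxsupp]
        exact Equiv.Perm.mem_support.mp hxsupp
      refine ⟨x, ?_, ?_⟩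
      · rw [Finset.mem_filter, hS, Finset.mem_filter]
        exact ⟨⟨Finset.mem_univ x, hxS⟩, hxne⟩
      · exact (Equiv.Perm.cycle_is_cycleOf hxsupp hc).symm
  have hct : π.cycleType.card = π.cycleFactorsFinset.card := by
    rw [Equiv.Perm.cycleType_def, Multiset.card_map]
    rfl
  rw [numCycles, hct, ← hsplit, hfix, hnonfix]
  omega

/-- Under Foata's correspondence, the number of cycles of `π` equals the
number of left-to-right maxima in the one-line notation of the image permutation. -/
theorem foata_cycles_eq_records (n : ℕ) (π : Equiv.Perm (Fin n)) :
    numCycles π = lrMaxCount (foataWord π) := by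
  classical
  rw [card_S π]
  have h1 : lrMaxCount (foataWord π) = cnt none (foataWord π) :=
    lrMaxCount_eq_cnt _
  rw [h1, foataWord]
  rw [cnt_flatMap _ _ none (Finset.sortedLT_sort _).pairwise (by simp)
    (fun x hx => cycleWord_spec π x
      (by
        rw [Finset.mem_sort, Finset.mem_filter] at hx
        exact hx.2))]
  rw [Finset.length_sort]
end

section
/- The Markov chain Π^H defined by double uniform insertion has transition probabilities P(Π^H_n = τ | Π^H_k = σ) = (k!/n!) · t(σ, τ) for all k ≤ n, σ ∈ S_k, τ ∈ S_n. -/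
/-- `patFreq σ π` is the relative frequency `t(σ, π)` of the pattern `σ ∈ S_k` in
`π ∈ S_n`: the fraction of `k`-element subsets of `[n]` (encoded as strictly increasing
maps) whose induced pattern equals `σ`; it is `0` when `k > n`. -/
def patFreq {k n : ℕ} (σ : Equiv.Perm (Fin k)) (π : Equiv.Perm (Fin n)) : ℚ :=
  (((Finset.univ : Finset (Fin k → Fin n)).filter
      (fun f => (∀ i j : Fin k, i < j → f i < f j) ∧
        (∀ i j : Fin k, σ i < σ j ↔ π (f i) < π (f j)))).card : ℚ) / (n.choose k)

/-- Insertion of the value `J` at position `I` into the permutation `π ∈ S_n`: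
the resulting permutation `τ ∈ S_{n+1}` satisfies `τ I = J`, and on the remaining
positions the values of `π` keep their relative order (positions `≥ I` are shifted right
and values `≥ J` are incremented). -/
def insertPerm {n : ℕ} (π : Equiv.Perm (Fin n)) (I J : Fin (n + 1)) :
    Equiv.Perm (Fin (n + 1)) :=
  ((finSuccEquiv' I).trans (Equiv.optionCongr π)).trans (finSuccEquiv' J).symm

/-- count version -/
def patCount {k n : ℕ} (σ : Equiv.Perm (Fin k)) (π : Equiv.Perm (Fin n)) : ℕ :=
  ((Finset.univ : Finset (Fin k → Fin n)).filter
      (fun f => (∀ i j : Fin k, i < j → f i < f j) ∧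
        (∀ i j : Fin k, σ i < σ j ↔ π (f i) < π (f j)))).card

lemma patFreq_eq {k n : ℕ} (σ : Equiv.Perm (Fin k)) (π : Equiv.Perm (Fin n)) :
    patFreq σ π = (patCount σ π : ℚ) / (n.choose k) := rfl

/-- deletion of position I -/
def delPerm {n : ℕ} (τ : Equiv.Perm (Fin (n+1))) (I : Fin (n+1)) : Equiv.Perm (Fin n) :=
  Equiv.removeNone (((finSuccEquiv' I).symm.trans τ).trans (finSuccEquiv' (τ I)))

lemma delPerm_succAbove {n : ℕ} (τ : Equiv.Perm (Fin (n+1))) (I : Fin (n+1)) (x : Fin n) :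
    (τ I).succAbove (delPerm τ I x) = τ (I.succAbove x) := by
  obtain ⟨z, hz⟩ : ∃ z, (τ I).succAbove z = τ (I.succAbove x) :=
    Fin.exists_succAbove_eq (by simp [τ.injective.ne_iff, Fin.succAbove_ne])
  have h : (((finSuccEquiv' I).symm.trans τ).trans (finSuccEquiv' (τ I))) (some x) = some z := by
    simp [← hz]
  have := Equiv.removeNone_some _ ⟨z, h⟩
  rw [h] at this
  rw [delPerm, Option.some_inj.mp this, hz]

lemma insertPerm_apply_self {n : ℕ} (ρ : Equiv.Perm (Fin n)) (I J : Fin (n+1)) :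
    insertPerm ρ I J I = J := by
  simp [insertPerm]

lemma insertPerm_apply_succAbove {n : ℕ} (ρ : Equiv.Perm (Fin n)) (I J : Fin (n+1)) (x : Fin n) :
    insertPerm ρ I J (I.succAbove x) = J.succAbove (ρ x) := by
  simp [insertPerm]

lemma insertPerm_eq_iff {n : ℕ} (ρ : Equiv.Perm (Fin n)) (I J : Fin (n+1))
    (τ : Equiv.Perm (Fin (n+1))) :
    insertPerm ρ I J = τ ↔ J = τ I ∧ ρ = delPerm τ I := by
  constructor
  · rintro rfl
    refine ⟨(insertPerm_apply_self ρ I J).symm, ?_⟩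
    ext x : 1
    apply Fin.succAbove_right_injective (p := J)
    have h1 := delPerm_succAbove (insertPerm ρ I J) I x
    rw [insertPerm_apply_self, insertPerm_apply_succAbove] at h1
    exact h1.symm
  · rintro ⟨rfl, rfl⟩
    ext x : 1
    rcases eq_or_ne x I with rfl | hx
    · exact insertPerm_apply_self _ _ _
    · obtain ⟨y, rfl⟩ := Fin.exists_succAbove_eq hx
      rw [insertPerm_apply_succAbove, delPerm_succAbove]

lemma pstep_card {n : ℕ} (ρ : Equiv.Perm (Fin n)) (τ : Equiv.Perm (Fin (n+1))) :
    ((Finset.univ : Finset (Fin (n + 1) × Fin (n + 1))).filter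
      (fun p => insertPerm ρ p.1 p.2 = τ)).card
    = (Finset.univ.filter (fun I : Fin (n+1) => delPerm τ I = ρ)).card := by
  apply Finset.card_bij' (fun p _ => p.1) (fun I _ => (I, τ I))
  · intro p hp
    simp only [Finset.mem_filter, Finset.mem_univ, true_and] at hp ⊢
    exact ((insertPerm_eq_iff _ _ _ _).mp hp).2.symm
  · intro I hI
    simp only [Finset.mem_filter, Finset.mem_univ, true_and] at hI ⊢
    exact (insertPerm_eq_iff _ _ _ _).mpr ⟨rfl, hI.symm⟩
  · rintro ⟨I0, J0⟩ hp
    simp only [Finset.mem_filter, Finset.mem_univ, true_and] at hp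
    have h := ((insertPerm_eq_iff _ _ _ _).mp hp).1
    simp [h]
  · intro I hI; rfl

lemma strictMono_fin_id {k : ℕ} {f : Fin k → Fin k} (hf : StrictMono f) : f = id := by
  have hsurj : Function.Surjective f := Finite.injective_iff_surjective.mp hf.injective
  have hr : Set.range f = Set.range (id : Fin k → Fin k) := by
    rw [Set.range_eq_univ.mpr hsurj, Set.range_id]
  haveI : WellFoundedLT (Fin k) := inferInstance
  exact (hf.range_inj strictMono_id).mp hr

lemma perm_eq_of_pattern {k : ℕ} {σ τ : Equiv.Perm (Fin k)}
    (h : ∀ i j : Fin k, σ i < σ j ↔ τ i < τ j) : σ = τ := by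
  have hs : StrictMono (fun a => τ (σ.symm a)) := fun a b hab =>
    (h (σ.symm a) (σ.symm b)).mp (by simpa using hab)
  have h2 := strictMono_fin_id hs
  ext x : 1
  simpa using (congrFun h2 (σ x)).symm

lemma patCount_self {k : ℕ} (σ τ : Equiv.Perm (Fin k)) :
    patCount σ τ = if σ = τ then 1 else 0 := by
  split_ifs with h
  · subst h
    rw [patCount, show ((Finset.univ : Finset (Fin k → Fin k)).filter _) = {id} from ?_,
      Finset.card_singleton]
    ext f
    simp only [Finset.mem_filter, Finset.mem_univ, true_and, Finset.mem_singleton]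
    constructor
    · rintro ⟨h1, _⟩; exact strictMono_fin_id (fun i j hij => h1 i j hij)
    · rintro rfl; exact ⟨fun i j h => h, fun i j => Iff.rfl⟩
  · rw [patCount, Finset.card_eq_zero]
    ext f
    simp only [Finset.mem_filter, Finset.mem_univ, true_and, Finset.notMem_empty,
      iff_false, not_and]
    intro h1 h2
    have hfid : f = id := strictMono_fin_id (fun i j hij => h1 i j hij)
    subst hfid
    exact h (perm_eq_of_pattern (by simpa using h2))

def patSet {k n : ℕ} (σ : Equiv.Perm (Fin k)) (π : Equiv.Perm (Fin n)) :
    Finset (Fin k → Fin n) :=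
  (Finset.univ : Finset (Fin k → Fin n)).filter
      (fun f => (∀ i j : Fin k, i < j → f i < f j) ∧
        (∀ i j : Fin k, σ i < σ j ↔ π (f i) < π (f j)))

lemma patCount_eq_patSet {k n : ℕ} (σ : Equiv.Perm (Fin k)) (π : Equiv.Perm (Fin n)) :
    patCount σ π = (patSet σ π).card := rfl

lemma card_del_eq {k n : ℕ} (σ : Equiv.Perm (Fin k)) (τ : Equiv.Perm (Fin (n+1)))
    (I : Fin (n+1)) :
    patCount σ (delPerm τ I)
      = ((patSet σ τ).filter (fun f => ∀ j, f j ≠ I)).card := by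
  rw [patCount_eq_patSet]
  apply Finset.card_bij (fun g _ => I.succAbove ∘ g)
  · intro g hg
    simp only [patSet, Finset.mem_filter, Finset.mem_univ, true_and] at hg ⊢
    obtain ⟨h1, h2⟩ := hg
    refine ⟨⟨fun i j hij => ?_, fun i j => ?_⟩, fun j => Fin.succAbove_ne I (g j)⟩
    · exact Fin.succAbove_lt_succAbove_iff.mpr (h1 i j hij)
    · rw [h2 i j]
      simp only [Function.comp_apply, ← delPerm_succAbove τ I,
        Fin.succAbove_lt_succAbove_iff]
  · intro g1 h1 g2 h2 he
    funext j
    exact Fin.succAbove_right_injective (congrFun he j)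
  · intro f hf
    simp only [patSet, Finset.mem_filter, Finset.mem_univ, true_and] at hf
    obtain ⟨⟨h1, h2⟩, h3⟩ := hf
    choose g hg using fun j => Fin.exists_succAbove_eq (h3 j)
    refine ⟨g, ?_, funext hg⟩
    simp only [patSet, Finset.mem_filter, Finset.mem_univ, true_and]
    constructor
    · intro i j hij
      have := h1 i j hij
      rw [← hg i, ← hg j] at this
      exact Fin.succAbove_lt_succAbove_iff.mp this
    · intro i j
      rw [h2 i j, ← hg i, ← hg j, ← delPerm_succAbove τ I, ← delPerm_succAbove τ I,
        Fin.succAbove_lt_succAbove_iff]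

lemma sum_patCount_del {k n : ℕ} (σ : Equiv.Perm (Fin k)) (τ : Equiv.Perm (Fin (n+1))) :
    ∑ I : Fin (n+1), patCount σ (delPerm τ I) = (n + 1 - k) * patCount σ τ := by
  calc ∑ I : Fin (n+1), patCount σ (delPerm τ I)
      = ∑ I : Fin (n+1), ((patSet σ τ).filter (fun f => ∀ j, f j ≠ I)).card :=
        Finset.sum_congr rfl fun I _ => card_del_eq σ τ I
    _ = ∑ I : Fin (n+1), ∑ f ∈ patSet σ τ, if (∀ j, f j ≠ I) then 1 else 0 :=
        Finset.sum_congr rfl fun I _ => Finset.card_filter _ _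
    _ = ∑ f ∈ patSet σ τ, ∑ I : Fin (n+1), if (∀ j, f j ≠ I) then 1 else 0 :=
        Finset.sum_comm
    _ = ∑ f ∈ patSet σ τ, (n + 1 - k) := by
        apply Finset.sum_congr rfl
        intro f hf
        simp only [patSet, Finset.mem_filter, Finset.mem_univ, true_and] at hf
        have hsm : StrictMono f := fun i j hij => hf.1 i j hij
        have hinj : Function.Injective f := hsm.injective
        rw [← Finset.card_filter]
        have he : Finset.univ.filter (fun I : Fin (n+1) => ∀ j, f j ≠ I)
            = (Finset.univ.image f)ᶜ := by
          ext I
          simp only [Finset.mem_filter, Finset.mem_univ, true_and, Finset.mem_compl,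
            Finset.mem_image, not_exists, not_and]
        rw [he, Finset.card_compl, Finset.card_image_of_injective _ hinj]
        simp
    _ = (n + 1 - k) * patCount σ τ := by
        rw [Finset.sum_const, patCount_eq_patSet, smul_eq_mul, mul_comm]

lemma sum_comp_fiber {α β : Type*} [Fintype α] [Fintype β] [DecidableEq β]
    (g : α → β) (F : β → ℚ) :
    ∑ b : β, F b * ((Finset.univ.filter (fun a => g a = b)).card : ℚ)
      = ∑ a : α, F (g a) := by
  simp_rw [Finset.card_filter]
  push_cast
  simp_rw [Finset.mul_sum, mul_ite, mul_one, mul_zero]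
  rw [Finset.sum_comm]
  apply Finset.sum_congr rfl
  intro a _
  rw [Finset.sum_ite_eq Finset.univ (g a) F]
  simp

lemma choose_id (n k : ℕ) :
    (n + 1 - k) * (n+1).choose k = (n + 1) * n.choose k := by
  calc (n + 1 - k) * (n+1).choose k = (n+1).choose k * (n+1-k) := mul_comm _ _
    _ = (n+1).choose (k+1) * (k+1) := (Nat.choose_succ_right_eq (n+1) k).symm
    _ = Nat.succ n * n.choose k := (Nat.add_one_mul_choose_eq n k).symm


/-- One-step transition probability of the double-insertion chain `Π^H`: insert a
uniform value `J` at a uniform position `I`, both on `[n+1]`, independently. -/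
def pstepH {n : ℕ} (π : Equiv.Perm (Fin n)) (τ : Equiv.Perm (Fin (n + 1))) : ℚ :=
  (((Finset.univ : Finset (Fin (n + 1) × Fin (n + 1))).filter
      (fun p => insertPerm π p.1 p.2 = τ)).card : ℚ) / ((n + 1) ^ 2)

/-- `pH k σ m τ` is the `m`-step transition probability
`P(Π^H_{k+m} = τ | Π^H_k = σ)` of the double-insertion Markov chain. -/
def pH (k : ℕ) (σ : Equiv.Perm (Fin k)) : (m : ℕ) → Equiv.Perm (Fin (k + m)) → ℚ
  | 0, τ => if σ = τ then 1 else 0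
  | m + 1, τ => ∑ ρ : Equiv.Perm (Fin (k + m)), pH k σ m ρ * pstepH ρ τ

/-- The double-insertion chain `Π^H` has transition probabilities
`P(Π^H_n = τ | Π^H_k = σ) = (k!/n!) · t(σ, τ)` for all `k ≤ n` (here `n = k + m`). -/
theorem pH_eq_patFreq (k m : ℕ) (σ : Equiv.Perm (Fin k))
    (τ : Equiv.Perm (Fin (k + m))) :
    pH k σ m τ = ((Nat.factorial k : ℚ) / (Nat.factorial (k + m))) * patFreq σ τ := by
  induction m with
  | zero =>
    rw [pH, patFreq_eq, patCount_self]
    have h1 : ((k+0).choose k : ℚ) = 1 := by norm_num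
    have h2 : ((k+0).factorial : ℚ) = (k.factorial : ℚ) := by norm_num
    have h3 : (k.factorial : ℚ) ≠ 0 := by positivity
    rw [h1, h2]
    split_ifs with h
    · rw [div_self h3]; norm_num
    · simp
  | succ m ih =>
    have hd : ∀ ρ : Equiv.Perm (Fin (k+m)), pH k σ m ρ * pstepH ρ τ
        = ((k.factorial : ℚ) / (k+m).factorial) / (((k+m : ℕ) : ℚ) + 1)^2
          * (patFreq σ ρ *
            (((Finset.univ.filter (fun I : Fin (k+m+1) => delPerm τ I = ρ)).card : ℚ))) := by
      intro ρ
      rw [ih ρ, pstepH, pstep_card]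
      push_cast
      ring
    have hkey : ∑ i : Equiv.Perm (Fin (k+m)), patFreq σ i *
          (((Finset.univ.filter (fun I : Fin (k+m+1) => delPerm τ I = i)).card : ℚ))
        = ∑ I : Fin (k+m+1), patFreq σ (delPerm τ I) :=
      sum_comp_fiber (fun I : Fin (k+m+1) => delPerm τ I) (patFreq σ)
    rw [pH, Finset.sum_congr rfl (fun ρ _ => hd ρ), ← Finset.mul_sum, hkey]
    have hsum : ∑ I : Fin (k+m+1), patFreq σ (delPerm τ I)
        = (((k + m + 1 - k) * patCount σ τ : ℕ) : ℚ) / ((k+m).choose k) := by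
      have hdel := sum_patCount_del (n := k + m) σ τ
      rw [← hdel, Nat.cast_sum, Finset.sum_div]
      exact Finset.sum_congr rfl fun I _ => patFreq_eq σ (delPerm τ I)
    rw [hsum, patFreq_eq]
    have hch : ((k + m + 1 - k) * ((k+m+1).choose k) : ℕ) = ((k+m) + 1) * ((k+m).choose k) :=
      choose_id (k+m) k
    have h1 : ((k+m).choose k : ℚ) ≠ 0 := by
      exact_mod_cast (Nat.choose_pos (Nat.le_add_right k m)).ne'
    have h2 : (((k+m)+1).choose k : ℚ) ≠ 0 := by
      exact_mod_cast (Nat.choose_pos ((Nat.le_add_right k m).trans (Nat.le_succ _))).ne'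
    have h3 : ((k+m).factorial : ℚ) ≠ 0 := by positivity
    have h4 : ((k + (m+1)).factorial : ℚ) = (((k+m) : ℚ) + 1) * ((k+m).factorial : ℚ) := by
      have : (k + (m+1)).factorial = ((k+m)+1) * (k+m).factorial := Nat.factorial_succ (k+m)
      rw [this]; push_cast; ring
    have h5 : (((k+m) : ℚ) + 1) ≠ 0 := by positivity
    have hchq : ((k + m + 1 - k : ℕ) : ℚ) * (((k+m+1).choose k : ℕ) : ℚ)
        = (((k+m) : ℚ) + 1) * (((k+m).choose k : ℕ) : ℚ) := by
      exact_mod_cast congrArg (fun x : ℕ => (x : ℚ)) hch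
    rw [h4]
    rw [show (k + (m+1)).choose k = (k+m+1).choose k from rfl]
    push_cast
    field_simp
    linear_combination (↑(patCount σ τ) : ℚ) * hchq
end

section
/- Under independence, the conditional probability that three i.i.d. uniform points on the unit square realize the identity pattern 123 given the first point is (x,y) equals 2x(1−x)y(1−y) + x²y²/2 + (1−x)²(1−y)²/2. -/
open MeasureTheory

/-- The uniform distribution on `[0,1]` (Lebesgue measure restricted to `[0,1]`). -/
noncomputable def unif01 : Measure ℝ := volume.restrict (Set.Icc (0 : ℝ) 1)

open Set ENNReal

instance : SigmaFinite unif01 := by unfold unif01; infer_instance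
instance : SFinite unif01 := by unfold unif01; infer_instance

lemma unif01_Ioc {u v : ℝ} (hu : 0 ≤ u) (hv : v ≤ 1) :
    unif01 (Set.Ioc u v) = ENNReal.ofReal (v - u) := by
  have hsub : Set.Ioc u v ∩ Set.Icc 0 1 = Set.Ioc u v :=
    Set.inter_eq_left.2 (fun t ht => ⟨le_trans hu ht.1.le, le_trans ht.2 hv⟩)
  rw [unif01, Measure.restrict_apply measurableSet_Ioc, hsub, Real.volume_Ioc]

lemma unif01_Iic {v : ℝ} (h0 : 0 ≤ v) (h1 : v ≤ 1) :
    unif01 (Set.Iic v) = ENNReal.ofReal v := by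
  rw [unif01, Measure.restrict_apply measurableSet_Iic]
  have : Set.Iic v ∩ Set.Icc 0 1 = Set.Icc 0 v := by
    ext t; simp only [Set.mem_inter_iff, Set.mem_Iic, Set.mem_Icc]
    constructor
    · rintro ⟨h, h', _⟩; exact ⟨h', h⟩
    · rintro ⟨h, h'⟩; exact ⟨h', h, le_trans h' h1⟩
  rw [this, Real.volume_Icc, sub_zero]

lemma unif01_Ioi {u : ℝ} (h0 : 0 ≤ u) (h1 : u ≤ 1) :
    unif01 (Set.Ioi u) = ENNReal.ofReal (1 - u) := by
  rw [unif01, Measure.restrict_apply measurableSet_Ioi]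
  have : Set.Ioi u ∩ Set.Icc 0 1 = Set.Ioc u 1 := by
    ext t; simp only [Set.mem_inter_iff, Set.mem_Ioi, Set.mem_Icc, Set.mem_Ioc]
    constructor
    · rintro ⟨h, _, h'⟩; exact ⟨h, h'⟩
    · rintro ⟨h, h'⟩; exact ⟨h, le_trans h0 h.le, h'⟩
  rw [this, Real.volume_Ioc]

lemma lint_core {u v : ℝ} (h : u ≤ v) :
    ∫⁻ a in Set.Icc u v, ENNReal.ofReal (v - a) = ENNReal.ofReal ((v - u) ^ 2 / 2) := by
  rw [← ofReal_integral_eq_lintegral_ofReal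
    (Continuous.integrableOn_Icc (by fun_prop : Continuous fun a : ℝ => v - a))
    (by filter_upwards [ae_restrict_mem measurableSet_Icc] with a ha
        simp only [Pi.zero_apply]; linarith [ha.2])]
  congr 1
  rw [MeasureTheory.integral_Icc_eq_integral_Ioc, ← intervalIntegral.integral_of_le h]
  rw [intervalIntegral.integral_sub intervalIntegrable_const intervalIntegral.intervalIntegrable_id,
    intervalIntegral.integral_const]
  open intervalIntegral in rw [integral_id]
  simp only [smul_eq_mul]; ring

lemma lint_core' {u v : ℝ} (h : u ≤ v) :
    ∫⁻ a in Set.Icc u v, ENNReal.ofReal (a - u) = ENNReal.ofReal ((v - u) ^ 2 / 2) := by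
  rw [← ofReal_integral_eq_lintegral_ofReal
    (Continuous.integrableOn_Icc (by fun_prop : Continuous fun a : ℝ => a - u))
    (by filter_upwards [ae_restrict_mem measurableSet_Icc] with a ha
        simp only [Pi.zero_apply]; linarith [ha.1])]
  congr 1
  rw [MeasureTheory.integral_Icc_eq_integral_Ioc, ← intervalIntegral.integral_of_le h]
  rw [intervalIntegral.integral_sub intervalIntegral.intervalIntegrable_id intervalIntegrable_const,
    intervalIntegral.integral_const]
  open intervalIntegral in rw [integral_id]
  simp only [smul_eq_mul]; ring

lemma lintegral_unif01_eq (f : ℝ → ℝ≥0∞) :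
    ∫⁻ a, f a ∂unif01 = ∫⁻ a in Set.Icc (0:ℝ) 1, f a := by rw [unif01]

lemma L1 {t : ℝ} (h0 : 0 ≤ t) (h1 : t ≤ 1) :
    ∫⁻ a, ENNReal.ofReal (t - a) ∂unif01 = ENNReal.ofReal (t ^ 2 / 2) := by
  rw [lintegral_unif01_eq, ← Set.Icc_union_Ioc_eq_Icc h0 h1,
    lintegral_union measurableSet_Ioc (by
      rw [Set.disjoint_left]; rintro a ⟨_, h2⟩ ⟨h3, _⟩; exact absurd h2 (not_le.2 h3))]
  have hz : ∫⁻ a in Set.Ioc t 1, ENNReal.ofReal (t - a) = ∫⁻ a in Set.Ioc t 1, 0 :=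
    setLIntegral_congr_fun measurableSet_Ioc (
      (fun a ha => ENNReal.ofReal_eq_zero.2 (by linarith [ha.1])))
  rw [hz, lintegral_zero, add_zero, lint_core h0]
  norm_num

lemma L2 {t : ℝ} (h0 : 0 ≤ t) (h1 : t ≤ 1) :
    ∫⁻ a, ENNReal.ofReal (a - t) ∂unif01 = ENNReal.ofReal ((1 - t) ^ 2 / 2) := by
  rw [lintegral_unif01_eq, ← Set.Icc_union_Ioc_eq_Icc h0 h1,
    lintegral_union measurableSet_Ioc (by
      rw [Set.disjoint_left]; rintro a ⟨_, h2⟩ ⟨h3, _⟩; exact absurd h2 (not_le.2 h3))]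
  have hz : ∫⁻ a in Set.Icc 0 t, ENNReal.ofReal (a - t) = ∫⁻ a in Set.Icc 0 t, 0 :=
    setLIntegral_congr_fun measurableSet_Icc (
      (fun a ha => ENNReal.ofReal_eq_zero.2 (by linarith [ha.2])))
  rw [hz, lintegral_zero, zero_add, setLIntegral_congr (Ioc_ae_eq_Icc), lint_core' h1]

lemma L3 {t : ℝ} (h0 : 0 ≤ t) (h1 : t ≤ 1) :
    ∫⁻ a, (Set.Iic t).indicator (fun a => ENNReal.ofReal a) a ∂unif01
      = ENNReal.ofReal (t ^ 2 / 2) := by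
  rw [lintegral_indicator measurableSet_Iic _, unif01,
    Measure.restrict_restrict measurableSet_Iic]
  have : Set.Iic t ∩ Set.Icc 0 1 = Set.Icc 0 t := by
    ext a; simp only [Set.mem_inter_iff, Set.mem_Iic, Set.mem_Icc]
    constructor
    · rintro ⟨h, h', _⟩; exact ⟨h', h⟩
    · rintro ⟨h, h'⟩; exact ⟨h', h, le_trans h' h1⟩
  rw [this]
  simpa using lint_core' h0

lemma L4 {t : ℝ} (h0 : 0 ≤ t) (h1 : t ≤ 1) :
    ∫⁻ a, (Set.Ioi t).indicator (fun a => ENNReal.ofReal (1 - a)) a ∂unif01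
      = ENNReal.ofReal ((1 - t) ^ 2 / 2) := by
  rw [lintegral_indicator measurableSet_Ioi _, unif01,
    Measure.restrict_restrict measurableSet_Ioi]
  have : Set.Ioi t ∩ Set.Icc 0 1 = Set.Ioc t 1 := by
    ext a; simp only [Set.mem_inter_iff, Set.mem_Ioi, Set.mem_Icc, Set.mem_Ioc]
    constructor
    · rintro ⟨h, _, h'⟩; exact ⟨h, h'⟩
    · rintro ⟨h, h'⟩; exact ⟨h, le_trans h0 h.le, h'⟩
  rw [this, setLIntegral_congr (Ioc_ae_eq_Icc), lint_core h1]

-- ae membership lemma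
lemma ae_mem_prod :
    ∀ᵐ p1 ∂(unif01.prod unif01), p1.1 ∈ Set.Icc (0:ℝ) 1 ∧ p1.2 ∈ Set.Icc (0:ℝ) 1 := by
  rw [show unif01.prod unif01 = (volume.prod volume).restrict
      ((Set.Icc (0:ℝ) 1) ×ˢ (Set.Icc (0:ℝ) 1)) from by
    rw [unif01, Measure.prod_restrict]]
  rw [ae_restrict_iff' (measurableSet_Icc.prod measurableSet_Icc)]
  exact Filter.Eventually.of_forall fun p hp => ⟨hp.1, hp.2⟩

section pieces
variable {x y : ℝ}

private lemma m11 : Measurable fun p : (ℝ × ℝ) × (ℝ × ℝ) => p.1.1 := measurable_fst.fst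
private lemma m12 : Measurable fun p : (ℝ × ℝ) × (ℝ × ℝ) => p.1.2 := measurable_fst.snd
private lemma m21 : Measurable fun p : (ℝ × ℝ) × (ℝ × ℝ) => p.2.1 := measurable_snd.fst
private lemma m22 : Measurable fun p : (ℝ × ℝ) × (ℝ × ℝ) => p.2.2 := measurable_snd.snd

lemma piece_lo_inc (hx0 : 0 ≤ x) (hx1 : x ≤ 1) (hy0 : 0 ≤ y) (hy1 : y ≤ 1) :
    ((unif01.prod unif01).prod (unif01.prod unif01))
      {p : (ℝ × ℝ) × (ℝ × ℝ) | p.1.1 < p.2.1 ∧ p.2.1 ≤ x ∧ p.1.2 < p.2.2 ∧ p.2.2 ≤ y}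
      = ENNReal.ofReal (x ^ 2 / 2) * ENNReal.ofReal (y ^ 2 / 2) := by
  have hT : MeasurableSet {p : (ℝ × ℝ) × (ℝ × ℝ) |
      p.1.1 < p.2.1 ∧ p.2.1 ≤ x ∧ p.1.2 < p.2.2 ∧ p.2.2 ≤ y} :=
    (measurableSet_lt m11 m21).inter ((measurableSet_le m21 measurable_const).inter
      ((measurableSet_lt m12 m22).inter (measurableSet_le m22 measurable_const)))
  rw [Measure.prod_apply hT]
  have hsec : ∀ p1 : ℝ × ℝ, (Prod.mk p1 ⁻¹' {p : (ℝ × ℝ) × (ℝ × ℝ) |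
      p.1.1 < p.2.1 ∧ p.2.1 ≤ x ∧ p.1.2 < p.2.2 ∧ p.2.2 ≤ y})
      = Set.Ioc p1.1 x ×ˢ Set.Ioc p1.2 y := by
    intro p1; ext p2
    simp only [Set.mem_preimage, Set.mem_setOf_eq, Set.mem_prod, Set.mem_Ioc]
    tauto
  have hcong : ∫⁻ p1, (unif01.prod unif01) (Prod.mk p1 ⁻¹' {p : (ℝ × ℝ) × (ℝ × ℝ) |
        p.1.1 < p.2.1 ∧ p.2.1 ≤ x ∧ p.1.2 < p.2.2 ∧ p.2.2 ≤ y}) ∂(unif01.prod unif01)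
      = ∫⁻ p1, ENNReal.ofReal (x - p1.1) * ENNReal.ofReal (y - p1.2) ∂(unif01.prod unif01) := by
    refine lintegral_congr_ae ?_
    filter_upwards [ae_mem_prod] with p1 hp1
    rw [hsec, Measure.prod_prod, unif01_Ioc hp1.1.1 hx1, unif01_Ioc hp1.2.1 hy1]
  rw [hcong, lintegral_prod_mul
    (by fun_prop : Measurable fun a : ℝ => ENNReal.ofReal (x - a)).aemeasurable
    (by fun_prop : Measurable fun b : ℝ => ENNReal.ofReal (y - b)).aemeasurable,
    L1 hx0 hx1, L1 hy0 hy1]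

lemma piece_hi_dec (hx0 : 0 ≤ x) (hx1 : x ≤ 1) (hy0 : 0 ≤ y) (hy1 : y ≤ 1) :
    ((unif01.prod unif01).prod (unif01.prod unif01))
      {p : (ℝ × ℝ) × (ℝ × ℝ) | x < p.2.1 ∧ p.2.1 ≤ p.1.1 ∧ y < p.2.2 ∧ p.2.2 ≤ p.1.2}
      = ENNReal.ofReal ((1 - x) ^ 2 / 2) * ENNReal.ofReal ((1 - y) ^ 2 / 2) := by
  have hT : MeasurableSet {p : (ℝ × ℝ) × (ℝ × ℝ) |
      x < p.2.1 ∧ p.2.1 ≤ p.1.1 ∧ y < p.2.2 ∧ p.2.2 ≤ p.1.2} :=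
    (measurableSet_lt measurable_const m21).inter ((measurableSet_le m21 m11).inter
      ((measurableSet_lt measurable_const m22).inter (measurableSet_le m22 m12)))
  rw [Measure.prod_apply hT]
  have hsec : ∀ p1 : ℝ × ℝ, (Prod.mk p1 ⁻¹' {p : (ℝ × ℝ) × (ℝ × ℝ) |
      x < p.2.1 ∧ p.2.1 ≤ p.1.1 ∧ y < p.2.2 ∧ p.2.2 ≤ p.1.2})
      = Set.Ioc x p1.1 ×ˢ Set.Ioc y p1.2 := by
    intro p1; ext p2
    simp only [Set.mem_preimage, Set.mem_setOf_eq, Set.mem_prod, Set.mem_Ioc]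
    tauto
  have hcong : ∫⁻ p1, (unif01.prod unif01) (Prod.mk p1 ⁻¹' {p : (ℝ × ℝ) × (ℝ × ℝ) |
        x < p.2.1 ∧ p.2.1 ≤ p.1.1 ∧ y < p.2.2 ∧ p.2.2 ≤ p.1.2}) ∂(unif01.prod unif01)
      = ∫⁻ p1, ENNReal.ofReal (p1.1 - x) * ENNReal.ofReal (p1.2 - y) ∂(unif01.prod unif01) := by
    refine lintegral_congr_ae ?_
    filter_upwards [ae_mem_prod] with p1 hp1
    rw [hsec, Measure.prod_prod, unif01_Ioc hx0 hp1.1.2, unif01_Ioc hy0 hp1.2.2]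
  rw [hcong, lintegral_prod_mul
    (by fun_prop : Measurable fun a : ℝ => ENNReal.ofReal (a - x)).aemeasurable
    (by fun_prop : Measurable fun b : ℝ => ENNReal.ofReal (b - y)).aemeasurable,
    L2 hx0 hx1, L2 hy0 hy1]

lemma piece_lo_dec (hx0 : 0 ≤ x) (hx1 : x ≤ 1) (hy0 : 0 ≤ y) (hy1 : y ≤ 1) :
    ((unif01.prod unif01).prod (unif01.prod unif01))
      {p : (ℝ × ℝ) × (ℝ × ℝ) | p.2.1 ≤ p.1.1 ∧ p.1.1 ≤ x ∧ p.2.2 ≤ p.1.2 ∧ p.1.2 ≤ y}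
      = ENNReal.ofReal (x ^ 2 / 2) * ENNReal.ofReal (y ^ 2 / 2) := by
  have hT : MeasurableSet {p : (ℝ × ℝ) × (ℝ × ℝ) |
      p.2.1 ≤ p.1.1 ∧ p.1.1 ≤ x ∧ p.2.2 ≤ p.1.2 ∧ p.1.2 ≤ y} :=
    (measurableSet_le m21 m11).inter ((measurableSet_le m11 measurable_const).inter
      ((measurableSet_le m22 m12).inter (measurableSet_le m12 measurable_const)))
  rw [Measure.prod_apply hT]
  have hcong : ∫⁻ p1, (unif01.prod unif01) (Prod.mk p1 ⁻¹' {p : (ℝ × ℝ) × (ℝ × ℝ) |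
        p.2.1 ≤ p.1.1 ∧ p.1.1 ≤ x ∧ p.2.2 ≤ p.1.2 ∧ p.1.2 ≤ y}) ∂(unif01.prod unif01)
      = ∫⁻ p1, ((Set.Iic x).indicator (fun a => ENNReal.ofReal a) p1.1) *
          ((Set.Iic y).indicator (fun b => ENNReal.ofReal b) p1.2) ∂(unif01.prod unif01) := by
    refine lintegral_congr_ae ?_
    filter_upwards [ae_mem_prod] with p1 hp1
    by_cases h1 : p1.1 ≤ x
    · by_cases h2 : p1.2 ≤ y
      · have hsec : (Prod.mk p1 ⁻¹' {p : (ℝ × ℝ) × (ℝ × ℝ) |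
            p.2.1 ≤ p.1.1 ∧ p.1.1 ≤ x ∧ p.2.2 ≤ p.1.2 ∧ p.1.2 ≤ y})
            = Set.Iic p1.1 ×ˢ Set.Iic p1.2 := by
          ext p2
          simp only [Set.mem_preimage, Set.mem_setOf_eq, Set.mem_prod, Set.mem_Iic]
          tauto
        rw [hsec, Measure.prod_prod, unif01_Iic hp1.1.1 hp1.1.2, unif01_Iic hp1.2.1 hp1.2.2]
        simp [Set.indicator_apply, Set.mem_Iic, h1, h2]
      · have hsec : (Prod.mk p1 ⁻¹' {p : (ℝ × ℝ) × (ℝ × ℝ) |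
            p.2.1 ≤ p.1.1 ∧ p.1.1 ≤ x ∧ p.2.2 ≤ p.1.2 ∧ p.1.2 ≤ y}) = ∅ := by
          ext p2
          simp only [Set.mem_preimage, Set.mem_setOf_eq, Set.mem_empty_iff_false, iff_false]
          tauto
        rw [hsec, measure_empty]
        simp [Set.indicator_apply, h2]
    · have hsec : (Prod.mk p1 ⁻¹' {p : (ℝ × ℝ) × (ℝ × ℝ) |
          p.2.1 ≤ p.1.1 ∧ p.1.1 ≤ x ∧ p.2.2 ≤ p.1.2 ∧ p.1.2 ≤ y}) = ∅ := by
        ext p2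
        simp only [Set.mem_preimage, Set.mem_setOf_eq, Set.mem_empty_iff_false, iff_false]
        tauto
      rw [hsec, measure_empty]
      simp [Set.indicator_apply, h1]
  rw [hcong, lintegral_prod_mul
    (Measurable.indicator (by fun_prop) measurableSet_Iic).aemeasurable
    (Measurable.indicator (by fun_prop) measurableSet_Iic).aemeasurable,
    L3 hx0 hx1, L3 hy0 hy1]

lemma piece_hi_inc (hx0 : 0 ≤ x) (hx1 : x ≤ 1) (hy0 : 0 ≤ y) (hy1 : y ≤ 1) :
    ((unif01.prod unif01).prod (unif01.prod unif01))
      {p : (ℝ × ℝ) × (ℝ × ℝ) | x < p.1.1 ∧ p.1.1 < p.2.1 ∧ y < p.1.2 ∧ p.1.2 < p.2.2}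
      = ENNReal.ofReal ((1 - x) ^ 2 / 2) * ENNReal.ofReal ((1 - y) ^ 2 / 2) := by
  have hT : MeasurableSet {p : (ℝ × ℝ) × (ℝ × ℝ) |
      x < p.1.1 ∧ p.1.1 < p.2.1 ∧ y < p.1.2 ∧ p.1.2 < p.2.2} :=
    (measurableSet_lt measurable_const m11).inter ((measurableSet_lt m11 m21).inter
      ((measurableSet_lt measurable_const m12).inter (measurableSet_lt m12 m22)))
  rw [Measure.prod_apply hT]
  have hcong : ∫⁻ p1, (unif01.prod unif01) (Prod.mk p1 ⁻¹' {p : (ℝ × ℝ) × (ℝ × ℝ) |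
        x < p.1.1 ∧ p.1.1 < p.2.1 ∧ y < p.1.2 ∧ p.1.2 < p.2.2}) ∂(unif01.prod unif01)
      = ∫⁻ p1, ((Set.Ioi x).indicator (fun a => ENNReal.ofReal (1 - a)) p1.1) *
          ((Set.Ioi y).indicator (fun b => ENNReal.ofReal (1 - b)) p1.2) ∂(unif01.prod unif01) := by
    refine lintegral_congr_ae ?_
    filter_upwards [ae_mem_prod] with p1 hp1
    by_cases h1 : x < p1.1
    · by_cases h2 : y < p1.2
      · have hsec : (Prod.mk p1 ⁻¹' {p : (ℝ × ℝ) × (ℝ × ℝ) |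
            x < p.1.1 ∧ p.1.1 < p.2.1 ∧ y < p.1.2 ∧ p.1.2 < p.2.2})
            = Set.Ioi p1.1 ×ˢ Set.Ioi p1.2 := by
          ext p2
          simp only [Set.mem_preimage, Set.mem_setOf_eq, Set.mem_prod, Set.mem_Ioi]
          tauto
        rw [hsec, Measure.prod_prod, unif01_Ioi hp1.1.1 hp1.1.2, unif01_Ioi hp1.2.1 hp1.2.2]
        simp [Set.indicator_apply, Set.mem_Ioi, h1, h2]
      · have hsec : (Prod.mk p1 ⁻¹' {p : (ℝ × ℝ) × (ℝ × ℝ) |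
            x < p.1.1 ∧ p.1.1 < p.2.1 ∧ y < p.1.2 ∧ p.1.2 < p.2.2}) = ∅ := by
          ext p2
          simp only [Set.mem_preimage, Set.mem_setOf_eq, Set.mem_empty_iff_false, iff_false]
          tauto
        rw [hsec, measure_empty]
        simp [Set.indicator_apply, h2]
    · have hsec : (Prod.mk p1 ⁻¹' {p : (ℝ × ℝ) × (ℝ × ℝ) |
          x < p.1.1 ∧ p.1.1 < p.2.1 ∧ y < p.1.2 ∧ p.1.2 < p.2.2}) = ∅ := by
        ext p2
        simp only [Set.mem_preimage, Set.mem_setOf_eq, Set.mem_empty_iff_false, iff_false]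
        tauto
      rw [hsec, measure_empty]
      simp [Set.indicator_apply, h1]
  rw [hcong, lintegral_prod_mul
    (Measurable.indicator (by fun_prop) measurableSet_Ioi).aemeasurable
    (Measurable.indicator (by fun_prop) measurableSet_Ioi).aemeasurable,
    L4 hx0 hx1, L4 hy0 hy1]

lemma piece_lohi (hx0 : 0 ≤ x) (hx1 : x ≤ 1) (hy0 : 0 ≤ y) (hy1 : y ≤ 1) :
    ((unif01.prod unif01).prod (unif01.prod unif01))
      {p : (ℝ × ℝ) × (ℝ × ℝ) | p.1.1 ≤ x ∧ p.1.2 ≤ y ∧ x < p.2.1 ∧ y < p.2.2}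
      = ENNReal.ofReal x * ENNReal.ofReal y *
          (ENNReal.ofReal (1 - x) * ENNReal.ofReal (1 - y)) := by
  have hset : {p : (ℝ × ℝ) × (ℝ × ℝ) | p.1.1 ≤ x ∧ p.1.2 ≤ y ∧ x < p.2.1 ∧ y < p.2.2}
      = (Set.Iic x ×ˢ Set.Iic y) ×ˢ (Set.Ioi x ×ˢ Set.Ioi y) := by
    ext p
    simp only [Set.mem_setOf_eq, Set.mem_prod, Set.mem_Iic, Set.mem_Ioi]
    tauto
  rw [hset, Measure.prod_prod, Measure.prod_prod, Measure.prod_prod,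
    unif01_Iic hx0 hx1, unif01_Iic hy0 hy1, unif01_Ioi hx0 hx1, unif01_Ioi hy0 hy1]

lemma piece_hilo (hx0 : 0 ≤ x) (hx1 : x ≤ 1) (hy0 : 0 ≤ y) (hy1 : y ≤ 1) :
    ((unif01.prod unif01).prod (unif01.prod unif01))
      {p : (ℝ × ℝ) × (ℝ × ℝ) | x < p.1.1 ∧ y < p.1.2 ∧ p.2.1 ≤ x ∧ p.2.2 ≤ y}
      = ENNReal.ofReal (1 - x) * ENNReal.ofReal (1 - y) *
          (ENNReal.ofReal x * ENNReal.ofReal y) := by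
  have hset : {p : (ℝ × ℝ) × (ℝ × ℝ) | x < p.1.1 ∧ y < p.1.2 ∧ p.2.1 ≤ x ∧ p.2.2 ≤ y}
      = (Set.Ioi x ×ˢ Set.Ioi y) ×ˢ (Set.Iic x ×ˢ Set.Iic y) := by
    ext p
    simp only [Set.mem_setOf_eq, Set.mem_prod, Set.mem_Iic, Set.mem_Ioi]
    tauto
  rw [hset, Measure.prod_prod, Measure.prod_prod, Measure.prod_prod,
    unif01_Iic hx0 hx1, unif01_Iic hy0 hy1, unif01_Ioi hx0 hx1, unif01_Ioi hy0 hy1]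

end pieces

/-- Under independence, the conditional probability that three i.i.d.
uniform points on the unit square realize the identity pattern `123`, given that the
first point is `(x, y)`, equals `2x(1−x)y(1−y) + x²y²/2 + (1−x)²(1−y)²/2`. The other
two points `((X₂,Y₂),(X₃,Y₃))` are distributed according to the product of uniform
distributions; the pattern is `123` iff all three pairs of points are concordant. -/
theorem phi_123_formula (x y : ℝ) (hx : x ∈ Set.Icc (0 : ℝ) 1)
    (hy : y ∈ Set.Icc (0 : ℝ) 1) :
    ((unif01.prod unif01).prod (unif01.prod unif01))
        {p : (ℝ × ℝ) × (ℝ × ℝ) |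
          (x < p.1.1 ↔ y < p.1.2) ∧ (x < p.2.1 ↔ y < p.2.2) ∧
            (p.1.1 < p.2.1 ↔ p.1.2 < p.2.2)} =
      ENNReal.ofReal
        (2 * x * (1 - x) * y * (1 - y) + x ^ 2 * y ^ 2 / 2 +
          (1 - x) ^ 2 * (1 - y) ^ 2 / 2) := by
  obtain ⟨hx0, hx1⟩ := hx
  obtain ⟨hy0, hy1⟩ := hy
  have hS : {p : (ℝ × ℝ) × (ℝ × ℝ) |
          (x < p.1.1 ↔ y < p.1.2) ∧ (x < p.2.1 ↔ y < p.2.2) ∧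
            (p.1.1 < p.2.1 ↔ p.1.2 < p.2.2)}
      = {p : (ℝ × ℝ) × (ℝ × ℝ) | p.1.1 ≤ x ∧ p.1.2 ≤ y ∧ x < p.2.1 ∧ y < p.2.2} ∪
        ({p : (ℝ × ℝ) × (ℝ × ℝ) | x < p.1.1 ∧ y < p.1.2 ∧ p.2.1 ≤ x ∧ p.2.2 ≤ y} ∪
        ({p : (ℝ × ℝ) × (ℝ × ℝ) | p.1.1 < p.2.1 ∧ p.2.1 ≤ x ∧ p.1.2 < p.2.2 ∧ p.2.2 ≤ y} ∪
        ({p : (ℝ × ℝ) × (ℝ × ℝ) | p.2.1 ≤ p.1.1 ∧ p.1.1 ≤ x ∧ p.2.2 ≤ p.1.2 ∧ p.1.2 ≤ y} ∪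
        ({p : (ℝ × ℝ) × (ℝ × ℝ) | x < p.1.1 ∧ p.1.1 < p.2.1 ∧ y < p.1.2 ∧ p.1.2 < p.2.2} ∪
         {p : (ℝ × ℝ) × (ℝ × ℝ) | x < p.2.1 ∧ p.2.1 ≤ p.1.1 ∧ y < p.2.2 ∧ p.2.2 ≤ p.1.2})))) := by
    ext p
    simp only [Set.mem_setOf_eq, Set.mem_union]
    constructor
    · rintro ⟨h1, h2, h3⟩
      by_cases hax : x < p.1.1
      · by_cases hcx : x < p.2.1
        · by_cases hac : p.1.1 < p.2.1
          · exact Or.inr (Or.inr (Or.inr (Or.inr (Or.inl ⟨hax, hac, h1.mp hax, h3.mp hac⟩))))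
          · exact Or.inr (Or.inr (Or.inr (Or.inr (Or.inr
              ⟨hcx, not_lt.1 hac, h2.mp hcx, not_lt.1 fun hbd => hac (h3.mpr hbd)⟩))))
        · exact Or.inr (Or.inl ⟨hax, h1.mp hax, not_lt.1 hcx,
            not_lt.1 fun hyd => hcx (h2.mpr hyd)⟩)
      · by_cases hcx : x < p.2.1
        · exact Or.inl ⟨not_lt.1 hax, not_lt.1 fun h => hax (h1.mpr h), hcx, h2.mp hcx⟩
        · by_cases hac : p.1.1 < p.2.1
          · exact Or.inr (Or.inr (Or.inl ⟨hac, not_lt.1 hcx, h3.mp hac,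
              not_lt.1 fun h => hcx (h2.mpr h)⟩))
          · exact Or.inr (Or.inr (Or.inr (Or.inl ⟨not_lt.1 hac, not_lt.1 hax,
              not_lt.1 fun h => hac (h3.mpr h), not_lt.1 fun h => hax (h1.mpr h)⟩)))
    · rintro (⟨g1, g2, g3, g4⟩ | ⟨g1, g2, g3, g4⟩ | ⟨g1, g2, g3, g4⟩ | ⟨g1, g2, g3, g4⟩ |
        ⟨g1, g2, g3, g4⟩ | ⟨g1, g2, g3, g4⟩) <;>
      refine ⟨?_, ?_, ?_⟩ <;> constructor <;> intro <;> linarith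
  have mA : MeasurableSet {p : (ℝ × ℝ) × (ℝ × ℝ) | p.1.1 ≤ x ∧ p.1.2 ≤ y ∧ x < p.2.1 ∧ y < p.2.2} :=
    (measurableSet_le m11 measurable_const).inter ((measurableSet_le m12 measurable_const).inter
      ((measurableSet_lt measurable_const m21).inter (measurableSet_lt measurable_const m22)))
  have mB : MeasurableSet {p : (ℝ × ℝ) × (ℝ × ℝ) | x < p.1.1 ∧ y < p.1.2 ∧ p.2.1 ≤ x ∧ p.2.2 ≤ y} :=
    (measurableSet_lt measurable_const m11).inter ((measurableSet_lt measurable_const m12).inter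
      ((measurableSet_le m21 measurable_const).inter (measurableSet_le m22 measurable_const)))
  have mC : MeasurableSet {p : (ℝ × ℝ) × (ℝ × ℝ) | p.1.1 < p.2.1 ∧ p.2.1 ≤ x ∧ p.1.2 < p.2.2 ∧ p.2.2 ≤ y} :=
    (measurableSet_lt m11 m21).inter ((measurableSet_le m21 measurable_const).inter
      ((measurableSet_lt m12 m22).inter (measurableSet_le m22 measurable_const)))
  have mD : MeasurableSet {p : (ℝ × ℝ) × (ℝ × ℝ) | p.2.1 ≤ p.1.1 ∧ p.1.1 ≤ x ∧ p.2.2 ≤ p.1.2 ∧ p.1.2 ≤ y} :=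
    (measurableSet_le m21 m11).inter ((measurableSet_le m11 measurable_const).inter
      ((measurableSet_le m22 m12).inter (measurableSet_le m12 measurable_const)))
  have mE : MeasurableSet {p : (ℝ × ℝ) × (ℝ × ℝ) | x < p.1.1 ∧ p.1.1 < p.2.1 ∧ y < p.1.2 ∧ p.1.2 < p.2.2} :=
    (measurableSet_lt measurable_const m11).inter ((measurableSet_lt m11 m21).inter
      ((measurableSet_lt measurable_const m12).inter (measurableSet_lt m12 m22)))
  have mF : MeasurableSet {p : (ℝ × ℝ) × (ℝ × ℝ) | x < p.2.1 ∧ p.2.1 ≤ p.1.1 ∧ y < p.2.2 ∧ p.2.2 ≤ p.1.2} :=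
    (measurableSet_lt measurable_const m21).inter ((measurableSet_le m21 m11).inter
      ((measurableSet_lt measurable_const m22).inter (measurableSet_le m22 m12)))
  have dA : Disjoint {p : (ℝ × ℝ) × (ℝ × ℝ) | p.1.1 ≤ x ∧ p.1.2 ≤ y ∧ x < p.2.1 ∧ y < p.2.2}
      ({p : (ℝ × ℝ) × (ℝ × ℝ) | x < p.1.1 ∧ y < p.1.2 ∧ p.2.1 ≤ x ∧ p.2.2 ≤ y} ∪
        ({p : (ℝ × ℝ) × (ℝ × ℝ) | p.1.1 < p.2.1 ∧ p.2.1 ≤ x ∧ p.1.2 < p.2.2 ∧ p.2.2 ≤ y} ∪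
        ({p : (ℝ × ℝ) × (ℝ × ℝ) | p.2.1 ≤ p.1.1 ∧ p.1.1 ≤ x ∧ p.2.2 ≤ p.1.2 ∧ p.1.2 ≤ y} ∪
        ({p : (ℝ × ℝ) × (ℝ × ℝ) | x < p.1.1 ∧ p.1.1 < p.2.1 ∧ y < p.1.2 ∧ p.1.2 < p.2.2} ∪
         {p : (ℝ × ℝ) × (ℝ × ℝ) | x < p.2.1 ∧ p.2.1 ≤ p.1.1 ∧ y < p.2.2 ∧ p.2.2 ≤ p.1.2})))) := by
    rw [Set.disjoint_left]
    rintro p ⟨a1, a2, a3, a4⟩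
      (⟨b1, b2, b3, b4⟩ | ⟨b1, b2, b3, b4⟩ | ⟨b1, b2, b3, b4⟩ | ⟨b1, b2, b3, b4⟩ | ⟨b1, b2, b3, b4⟩) <;>
      linarith
  have dB : Disjoint {p : (ℝ × ℝ) × (ℝ × ℝ) | x < p.1.1 ∧ y < p.1.2 ∧ p.2.1 ≤ x ∧ p.2.2 ≤ y}
      ({p : (ℝ × ℝ) × (ℝ × ℝ) | p.1.1 < p.2.1 ∧ p.2.1 ≤ x ∧ p.1.2 < p.2.2 ∧ p.2.2 ≤ y} ∪
        ({p : (ℝ × ℝ) × (ℝ × ℝ) | p.2.1 ≤ p.1.1 ∧ p.1.1 ≤ x ∧ p.2.2 ≤ p.1.2 ∧ p.1.2 ≤ y} ∪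
        ({p : (ℝ × ℝ) × (ℝ × ℝ) | x < p.1.1 ∧ p.1.1 < p.2.1 ∧ y < p.1.2 ∧ p.1.2 < p.2.2} ∪
         {p : (ℝ × ℝ) × (ℝ × ℝ) | x < p.2.1 ∧ p.2.1 ≤ p.1.1 ∧ y < p.2.2 ∧ p.2.2 ≤ p.1.2}))) := by
    rw [Set.disjoint_left]
    rintro p ⟨a1, a2, a3, a4⟩
      (⟨b1, b2, b3, b4⟩ | ⟨b1, b2, b3, b4⟩ | ⟨b1, b2, b3, b4⟩ | ⟨b1, b2, b3, b4⟩) <;> linarith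
  have dC : Disjoint {p : (ℝ × ℝ) × (ℝ × ℝ) | p.1.1 < p.2.1 ∧ p.2.1 ≤ x ∧ p.1.2 < p.2.2 ∧ p.2.2 ≤ y}
      ({p : (ℝ × ℝ) × (ℝ × ℝ) | p.2.1 ≤ p.1.1 ∧ p.1.1 ≤ x ∧ p.2.2 ≤ p.1.2 ∧ p.1.2 ≤ y} ∪
        ({p : (ℝ × ℝ) × (ℝ × ℝ) | x < p.1.1 ∧ p.1.1 < p.2.1 ∧ y < p.1.2 ∧ p.1.2 < p.2.2} ∪
         {p : (ℝ × ℝ) × (ℝ × ℝ) | x < p.2.1 ∧ p.2.1 ≤ p.1.1 ∧ y < p.2.2 ∧ p.2.2 ≤ p.1.2})) := by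
    rw [Set.disjoint_left]
    rintro p ⟨a1, a2, a3, a4⟩
      (⟨b1, b2, b3, b4⟩ | ⟨b1, b2, b3, b4⟩ | ⟨b1, b2, b3, b4⟩) <;> linarith
  have dD : Disjoint {p : (ℝ × ℝ) × (ℝ × ℝ) | p.2.1 ≤ p.1.1 ∧ p.1.1 ≤ x ∧ p.2.2 ≤ p.1.2 ∧ p.1.2 ≤ y}
      ({p : (ℝ × ℝ) × (ℝ × ℝ) | x < p.1.1 ∧ p.1.1 < p.2.1 ∧ y < p.1.2 ∧ p.1.2 < p.2.2} ∪
         {p : (ℝ × ℝ) × (ℝ × ℝ) | x < p.2.1 ∧ p.2.1 ≤ p.1.1 ∧ y < p.2.2 ∧ p.2.2 ≤ p.1.2}) := by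
    rw [Set.disjoint_left]
    rintro p ⟨a1, a2, a3, a4⟩ (⟨b1, b2, b3, b4⟩ | ⟨b1, b2, b3, b4⟩) <;> linarith
  have dE : Disjoint {p : (ℝ × ℝ) × (ℝ × ℝ) | x < p.1.1 ∧ p.1.1 < p.2.1 ∧ y < p.1.2 ∧ p.1.2 < p.2.2}
      {p : (ℝ × ℝ) × (ℝ × ℝ) | x < p.2.1 ∧ p.2.1 ≤ p.1.1 ∧ y < p.2.2 ∧ p.2.2 ≤ p.1.2} := by
    rw [Set.disjoint_left]
    rintro p ⟨a1, a2, a3, a4⟩ ⟨b1, b2, b3, b4⟩; linarith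
  rw [hS, measure_union dA (mB.union (mC.union (mD.union (mE.union mF)))),
    measure_union dB (mC.union (mD.union (mE.union mF))),
    measure_union dC (mD.union (mE.union mF)),
    measure_union dD (mE.union mF),
    measure_union dE mF,
    piece_lohi hx0 hx1 hy0 hy1, piece_hilo hx0 hx1 hy0 hy1,
    piece_lo_inc hx0 hx1 hy0 hy1, piece_lo_dec hx0 hx1 hy0 hy1,
    piece_hi_inc hx0 hx1 hy0 hy1, piece_hi_dec hx0 hx1 hy0 hy1]
  have hx' : (0:ℝ) ≤ 1 - x := by linarith
  have hy' : (0:ℝ) ≤ 1 - y := by linarith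
  have e1 : ENNReal.ofReal x * ENNReal.ofReal y *
      (ENNReal.ofReal (1 - x) * ENNReal.ofReal (1 - y))
      = ENNReal.ofReal (x * y * ((1 - x) * (1 - y))) := by
    rw [ENNReal.ofReal_mul (mul_nonneg hx0 hy0), ENNReal.ofReal_mul hx0, ENNReal.ofReal_mul hx']
  have e2 : ENNReal.ofReal (1 - x) * ENNReal.ofReal (1 - y) *
      (ENNReal.ofReal x * ENNReal.ofReal y)
      = ENNReal.ofReal ((1 - x) * (1 - y) * (x * y)) := by
    rw [ENNReal.ofReal_mul (mul_nonneg hx' hy'), ENNReal.ofReal_mul hx', ENNReal.ofReal_mul hx0]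
  have e3 : ENNReal.ofReal (x ^ 2 / 2) * ENNReal.ofReal (y ^ 2 / 2)
      = ENNReal.ofReal (x ^ 2 / 2 * (y ^ 2 / 2)) := by
    rw [ENNReal.ofReal_mul (by positivity)]
  have e4 : ENNReal.ofReal ((1 - x) ^ 2 / 2) * ENNReal.ofReal ((1 - y) ^ 2 / 2)
      = ENNReal.ofReal ((1 - x) ^ 2 / 2 * ((1 - y) ^ 2 / 2)) := by
    rw [ENNReal.ofReal_mul (by positivity)]
  rw [e1, e2, e3, e4]
  have nn1 : (0:ℝ) ≤ x * y * ((1 - x) * (1 - y)) :=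
    mul_nonneg (mul_nonneg hx0 hy0) (mul_nonneg hx' hy')
  have nn2 : (0:ℝ) ≤ (1 - x) * (1 - y) * (x * y) :=
    mul_nonneg (mul_nonneg hx' hy') (mul_nonneg hx0 hy0)
  have nn3 : (0:ℝ) ≤ x ^ 2 / 2 * (y ^ 2 / 2) := by positivity
  have nn4 : (0:ℝ) ≤ (1 - x) ^ 2 / 2 * ((1 - y) ^ 2 / 2) := by positivity
  rw [← ENNReal.ofReal_add nn4 nn4, ← ENNReal.ofReal_add nn3 (add_nonneg nn4 nn4),
    ← ENNReal.ofReal_add nn3 (add_nonneg nn3 (add_nonneg nn4 nn4)),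
    ← ENNReal.ofReal_add nn2 (add_nonneg nn3 (add_nonneg nn3 (add_nonneg nn4 nn4))),
    ← ENNReal.ofReal_add nn1 (add_nonneg nn2 (add_nonneg nn3 (add_nonneg nn3 (add_nonneg nn4 nn4))))]
  congr 1
  ring
end

section
/- If a sequence of permutations π_n ∈ S_n satisfies t(21, π_n) → 0 (the inversion frequency vanishes), then for every k and every non-identity σ ∈ S_k, t(σ, π_n) → 0, and consequently t(id_k, π_n) → 1 for every k. -/
open Filter Finset

namespace PatAux

variable {k n : ℕ}

/-- The finset underlying `patFreq`. -/
def patSet (σ : Equiv.Perm (Fin k)) (π : Equiv.Perm (Fin n)) : Finset (Fin k → Fin n) :=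
  (Finset.univ : Finset (Fin k → Fin n)).filter
      (fun f => (∀ i j : Fin k, i < j → f i < f j) ∧
        (∀ i j : Fin k, σ i < σ j ↔ π (f i) < π (f j)))

lemma patFreq_eq (σ : Equiv.Perm (Fin k)) (π : Equiv.Perm (Fin n)) :
    patFreq σ π = ((patSet σ π).card : ℚ) / (n.choose k) := rfl

lemma mem_patSet {σ : Equiv.Perm (Fin k)} {π : Equiv.Perm (Fin n)} {f : Fin k → Fin n} :
    f ∈ patSet σ π ↔ StrictMono f ∧ (∀ i j : Fin k, σ i < σ j ↔ π (f i) < π (f j)) := by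
  simp only [patSet, mem_filter, mem_univ, true_and]
  constructor
  · rintro ⟨h1, h2⟩; exact ⟨fun a b hab => h1 a b hab, h2⟩
  · rintro ⟨h1, h2⟩; exact ⟨fun a b hab => h1 hab, h2⟩

lemma perm_eq_one_of_strictMono {e : Equiv.Perm (Fin k)} (he : StrictMono ⇑e) : e = 1 := by
  have hr : Set.range ⇑e = Set.range (id : Fin k → Fin k) := by
    rw [Set.range_id, Set.range_eq_univ]
    exact e.surjective
  haveI : WellFoundedLT (Fin k) := inferInstance
  have h : ⇑e = id := by exact (he.range_inj strictMono_id).1 hr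
  ext i
  simp [h]

lemma exists_inversion {σ : Equiv.Perm (Fin k)} (hσ : σ ≠ 1) :
    ∃ i j : Fin k, i < j ∧ σ j < σ i := by
  by_contra hc
  push_neg at hc
  apply hσ
  apply perm_eq_one_of_strictMono
  intro a b hab
  rcases lt_trichotomy (σ a) (σ b) with h | h | h
  · exact h
  · exact absurd (σ.injective h) hab.ne
  · exact absurd h (not_lt.2 (hc a b hab))

lemma pattern_unique {σ τ : Equiv.Perm (Fin k)} {π : Equiv.Perm (Fin n)} {f : Fin k → Fin n}
    (hσ : ∀ i j : Fin k, σ i < σ j ↔ π (f i) < π (f j))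
    (hτ : ∀ i j : Fin k, τ i < τ j ↔ π (f i) < π (f j)) : σ = τ := by
  have h : StrictMono ⇑(σ.symm.trans τ) := by
    intro a b hab
    simp only [Equiv.trans_apply]
    rw [hτ, ← hσ, Equiv.apply_symm_apply, Equiv.apply_symm_apply]
    exact hab
  have h1 := perm_eq_one_of_strictMono h
  ext i
  have h2 : τ i = σ i := by
    simpa using congrArg (fun e : Equiv.Perm (Fin k) => e (σ i)) h1
  exact congrArg Fin.val h2.symm

/-- The pattern induced by `π` on the increasing map `f`. -/
def patOf (π : Equiv.Perm (Fin n)) (f : Fin k → Fin n) : Equiv.Perm (Fin k) :=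
  (Tuple.sort (fun i => π (f i)))⁻¹

lemma patOf_spec {π : Equiv.Perm (Fin n)} {f : Fin k → Fin n} (hf : Function.Injective f) :
    ∀ i j : Fin k, patOf π f i < patOf π f j ↔ π (f i) < π (f j) := by
  set v : Fin k → Fin n := fun i => π (f i) with hv
  have hvinj : Function.Injective v := fun a b hab => hf (π.injective hab)
  have hm : StrictMono (v ∘ ⇑(Tuple.sort v)) :=
    (Tuple.monotone_sort v).strictMono_of_injective (hvinj.comp (Equiv.injective _))
  intro i j
  have h1 : π (f i) = (v ∘ ⇑(Tuple.sort v)) ((Tuple.sort v)⁻¹ i) := by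
    simp [hv]
  have h2 : π (f j) = (v ∘ ⇑(Tuple.sort v)) ((Tuple.sort v)⁻¹ j) := by
    simp [hv]
  rw [h1, h2, hm.lt_iff_lt]
  rfl

lemma patSet_eq_fiber (σ : Equiv.Perm (Fin k)) (π : Equiv.Perm (Fin n)) :
    patSet σ π = (Finset.univ.filter (fun f : Fin k → Fin n => StrictMono f)).filter
      (fun f => patOf π f = σ) := by
  ext f
  simp only [mem_filter, mem_univ, true_and, mem_patSet]
  constructor
  · rintro ⟨h1, h2⟩
    exact ⟨h1, pattern_unique (patOf_spec h1.injective) h2⟩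
  · rintro ⟨h1, h2⟩
    exact ⟨h1, h2 ▸ patOf_spec h1.injective⟩

lemma card_strictMono :
    (Finset.univ.filter (fun f : Fin k → Fin n => StrictMono f)).card = n.choose k := by
  classical
  have hpc := Finset.card_powersetCard k (Finset.univ : Finset (Fin n))
  rw [Finset.card_univ, Fintype.card_fin] at hpc
  rw [← hpc]
  apply Finset.card_bij (fun f _ => Finset.image f Finset.univ)
  · intro f hf
    rw [Finset.mem_filter] at hf
    rw [Finset.mem_powersetCard]
    exact ⟨Finset.subset_univ _, by
      rw [Finset.card_image_of_injective _ hf.2.injective, Finset.card_univ, Fintype.card_fin]⟩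
  · intro f hf g hg hfg
    haveI : WellFoundedLT (Fin k) := inferInstance
    rw [Finset.mem_filter] at hf hg
    have hr : Set.range f = Set.range g := by
      rw [← Set.image_univ, ← Set.image_univ, ← Finset.coe_univ, ← Finset.coe_image,
        ← Finset.coe_image, hfg]
    exact (StrictMono.range_inj hf.2 hg.2).1 hr
  · intro s hs
    rw [Finset.mem_powersetCard] at hs
    refine ⟨s.orderEmbOfFin hs.2, ?_, ?_⟩
    · rw [Finset.mem_filter]; exact ⟨Finset.mem_univ _, (s.orderEmbOfFin hs.2).strictMono⟩
    · apply Finset.coe_injective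
      rw [Finset.coe_image, Finset.coe_univ, Set.image_univ]
      exact Finset.range_orderEmbOfFin s hs.2

lemma sum_card_patSet (π : Equiv.Perm (Fin n)) :
    ∑ σ : Equiv.Perm (Fin k), (patSet σ π).card = n.choose k := by
  classical
  rw [← card_strictMono (k := k) (n := n),
    Finset.card_eq_sum_card_fiberwise
      (f := fun f => patOf π f) (t := Finset.univ) (fun f _ => Finset.mem_univ _)]
  exact Finset.sum_congr rfl (fun σ _ => by rw [patSet_eq_fiber])

lemma k_ge_two {σ : Equiv.Perm (Fin k)} (hσ : σ ≠ 1) : 2 ≤ k := by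
  obtain ⟨i, j, hij, -⟩ := exists_inversion hσ
  have h2 := j.isLt
  have h3 : (i : ℕ) < (j : ℕ) := hij
  omega

lemma key_bound {σ : Equiv.Perm (Fin k)} (hσ : σ ≠ 1) (π : Equiv.Perm (Fin n)) :
    (patSet σ π).card ≤
      (n - 2).choose (k - 2) * (patSet (Equiv.swap (0 : Fin 2) 1) π).card := by
  classical
  obtain ⟨i₀, j₀, hij, hinv⟩ := exists_inversion hσ
  apply Finset.card_le_mul_card_image_of_maps_to (f := fun f => ![f i₀, f j₀])
  · intro f hf
    rw [mem_patSet] at hf ⊢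
    obtain ⟨hmono, hpat⟩ := hf
    have hlt : π (f j₀) < π (f i₀) := (hpat j₀ i₀).1 hinv
    constructor
    · intro a b hab
      fin_cases a <;> fin_cases b <;>
        simp_all [Matrix.cons_val_zero, Matrix.cons_val_one, Matrix.head_cons]
      exact hmono hij
    · intro a b
      fin_cases a <;> fin_cases b <;>
        simp_all [Matrix.cons_val_zero, Matrix.cons_val_one, Matrix.head_cons,
          Equiv.swap_apply_left, Equiv.swap_apply_right]
      exact hlt.le
  · intro g hg
    rw [mem_patSet] at hg
    have hg01 : g 0 < g 1 := hg.1 (show (0 : Fin 2) < 1 by norm_num)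
    have hT : ∀ f ∈ (patSet σ π).filter (fun f => ![f i₀, f j₀] = g),
        f i₀ = g 0 ∧ f j₀ = g 1 ∧ StrictMono f := by
      intro f hf
      rw [Finset.mem_filter, mem_patSet] at hf
      refine ⟨?_, ?_, hf.1.1⟩
      · have := congrFun hf.2 0; simpa using this
      · have := congrFun hf.2 1; simpa using this
    have htcard : (Finset.powersetCard (k - 2)
        ((Finset.univ.erase (g 0)).erase (g 1))).card = (n - 2).choose (k - 2) := by
      rw [Finset.card_powersetCard, Finset.card_erase_of_mem
        (Finset.mem_erase.2 ⟨hg01.ne', Finset.mem_univ _⟩),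
        Finset.card_erase_of_mem (Finset.mem_univ _), Finset.card_univ, Fintype.card_fin,
        Nat.sub_sub]
    rw [← htcard]
    apply Finset.card_le_card_of_injOn
      (fun f => ((Finset.image f Finset.univ).erase (g 0)).erase (g 1))
    · intro f hf
      obtain ⟨h0, h1, hm⟩ := hT f hf
      have hcard : (Finset.image f Finset.univ).card = k := by
        rw [Finset.card_image_of_injective _ hm.injective, Finset.card_univ, Fintype.card_fin]
      have hg0mem : g 0 ∈ Finset.image f Finset.univ :=
        Finset.mem_image.2 ⟨i₀, Finset.mem_univ _, h0⟩
      have hg1mem : g 1 ∈ (Finset.image f Finset.univ).erase (g 0) :=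
        Finset.mem_erase.2 ⟨hg01.ne', Finset.mem_image.2 ⟨j₀, Finset.mem_univ _, h1⟩⟩
      simp only [Finset.mem_coe]
      rw [Finset.mem_powersetCard]
      constructor
      · exact Finset.erase_subset_erase _ (Finset.erase_subset_erase _ (Finset.subset_univ _))
      · rw [Finset.card_erase_of_mem hg1mem, Finset.card_erase_of_mem hg0mem, hcard]
        omega
    · intro f₁ hf₁ f₂ hf₂ heq
      simp only [Set.mem_setOf_eq] at heq
      obtain ⟨h10, h11, hm1⟩ := hT f₁ hf₁
      obtain ⟨h20, h21, hm2⟩ := hT f₂ hf₂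
      have hg1mem₁ : g 1 ∈ (Finset.image f₁ Finset.univ).erase (g 0) :=
        Finset.mem_erase.2 ⟨hg01.ne', Finset.mem_image.2 ⟨j₀, Finset.mem_univ _, h11⟩⟩
      have hg1mem₂ : g 1 ∈ (Finset.image f₂ Finset.univ).erase (g 0) :=
        Finset.mem_erase.2 ⟨hg01.ne', Finset.mem_image.2 ⟨j₀, Finset.mem_univ _, h21⟩⟩
      have hg0mem₁ : g 0 ∈ Finset.image f₁ Finset.univ :=
        Finset.mem_image.2 ⟨i₀, Finset.mem_univ _, h10⟩
      have hg0mem₂ : g 0 ∈ Finset.image f₂ Finset.univ :=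
        Finset.mem_image.2 ⟨i₀, Finset.mem_univ _, h20⟩
      have he1 : (Finset.image f₁ Finset.univ).erase (g 0)
          = (Finset.image f₂ Finset.univ).erase (g 0) := by
        rw [← Finset.insert_erase hg1mem₁, heq, Finset.insert_erase hg1mem₂]
      have he0 : Finset.image f₁ Finset.univ = Finset.image f₂ Finset.univ := by
        rw [← Finset.insert_erase hg0mem₁, he1, Finset.insert_erase hg0mem₂]
      have hr : Set.range f₁ = Set.range f₂ := by
        rw [← Set.image_univ, ← Set.image_univ, ← Finset.coe_univ, ← Finset.coe_image,
          ← Finset.coe_image, he0]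
      haveI : WellFoundedLT (Fin k) := inferInstance
      exact (StrictMono.range_inj hm1 hm2).1 hr

lemma patFreq_nonneg (σ : Equiv.Perm (Fin k)) (π : Equiv.Perm (Fin n)) : 0 ≤ patFreq σ π :=
  div_nonneg (Nat.cast_nonneg _) (Nat.cast_nonneg _)

lemma freq_bound {σ : Equiv.Perm (Fin k)} (hσ : σ ≠ 1) (π : Equiv.Perm (Fin n)) :
    patFreq σ π ≤ (k.choose 2 : ℚ) * patFreq (Equiv.swap (0 : Fin 2) 1) π := by
  rcases le_or_gt k n with hkn | hnk
  · have hk2 : 2 ≤ k := k_ge_two hσ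
    have h2n : 2 ≤ n := hk2.trans hkn
    have hc2 : (0 : ℚ) < (n.choose 2 : ℚ) := by exact_mod_cast Nat.choose_pos h2n
    have hck : (0 : ℚ) < (n.choose k : ℚ) := by exact_mod_cast Nat.choose_pos hkn
    have hid : (n.choose k : ℚ) * (k.choose 2)
        = (n.choose 2) * ((n - 2).choose (k - 2)) := by
      exact_mod_cast Nat.choose_mul (n := n) hk2
    rw [patFreq_eq, patFreq_eq, div_le_iff₀ hck]
    calc ((patSet σ π).card : ℚ)
        ≤ ((n - 2).choose (k - 2) : ℚ) * ((patSet (Equiv.swap (0 : Fin 2) 1) π).card : ℚ) := by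
          exact_mod_cast key_bound hσ π
      _ = (k.choose 2 : ℚ) * (((patSet (Equiv.swap (0 : Fin 2) 1) π).card : ℚ)
            / (n.choose 2)) * (n.choose k) := by
          field_simp
          linear_combination ((patSet (Equiv.swap (0 : Fin 2) 1) π).card : ℚ) * hid.symm
  · rw [patFreq_eq (σ := σ), Nat.choose_eq_zero_of_lt hnk]
    simp only [Nat.cast_zero, div_zero]
    exact mul_nonneg (Nat.cast_nonneg _) (patFreq_nonneg _ _)

lemma sum_patFreq (hkn : k ≤ n) (π : Equiv.Perm (Fin n)) :
    ∑ σ : Equiv.Perm (Fin k), patFreq σ π = 1 := by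
  classical
  have hck : (0 : ℚ) < (n.choose k : ℚ) := by exact_mod_cast Nat.choose_pos hkn
  have : ∑ σ : Equiv.Perm (Fin k), patFreq σ π
      = (∑ σ : Equiv.Perm (Fin k), ((patSet σ π).card : ℚ)) / (n.choose k) := by
    rw [Finset.sum_div]
    rfl
  rw [this, div_eq_one_iff_eq hck.ne']
  exact_mod_cast sum_card_patSet (k := k) π

end PatAux

/-- If a sequence of permutations `π_n ∈ S_n` satisfies
`t(21, π_n) → 0`, then for every `k` and every non-identity `σ ∈ S_k`,
`t(σ, π_n) → 0`, and consequently `t(id_k, π_n) → 1` for every `k`. -/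
theorem inversion_freq_vanishes_implies (π : ∀ n : ℕ, Equiv.Perm (Fin n))
    (h : Tendsto (fun n => patFreq (Equiv.swap (0 : Fin 2) 1) (π n)) atTop (nhds 0)) :
    (∀ (k : ℕ) (σ : Equiv.Perm (Fin k)), σ ≠ 1 →
      Tendsto (fun n => patFreq σ (π n)) atTop (nhds 0)) ∧
    (∀ k : ℕ,
      Tendsto (fun n => patFreq (1 : Equiv.Perm (Fin k)) (π n)) atTop (nhds 1)) := by
  classical
  have part1 : ∀ (k : ℕ) (σ : Equiv.Perm (Fin k)), σ ≠ 1 →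
      Tendsto (fun n => patFreq σ (π n)) atTop (nhds 0) := by
    intro k σ hσ
    have hub : Tendsto (fun n => (k.choose 2 : ℚ) * patFreq (Equiv.swap (0 : Fin 2) 1) (π n))
        atTop (nhds 0) := by
      have := h.const_mul (k.choose 2 : ℚ)
      simpa using this
    exact tendsto_of_tendsto_of_tendsto_of_le_of_le tendsto_const_nhds hub
      (fun n => PatAux.patFreq_nonneg σ (π n)) (fun n => PatAux.freq_bound hσ (π n))
  refine ⟨part1, ?_⟩
  intro k
  have hsum : Tendsto (fun n => ∑ σ ∈ Finset.univ.erase (1 : Equiv.Perm (Fin k)),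
      patFreq σ (π n)) atTop (nhds 0) := by
    have := tendsto_finset_sum (Finset.univ.erase (1 : Equiv.Perm (Fin k)))
      (fun σ hσ => part1 k σ (Finset.ne_of_mem_erase hσ))
    simpa using this
  have hF : Tendsto (fun n => 1 - ∑ σ ∈ Finset.univ.erase (1 : Equiv.Perm (Fin k)),
      patFreq σ (π n)) atTop (nhds 1) := by
    have := (tendsto_const_nhds (x := (1 : ℚ)) (f := atTop)).sub hsum
    simpa using this
  refine hF.congr' ?_
  filter_upwards [eventually_ge_atTop k] with n hn
  have hs := PatAux.sum_patFreq hn (π n)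
  have hadd := Finset.sum_erase_add Finset.univ (fun σ => patFreq σ (π n))
    (Finset.mem_univ (1 : Equiv.Perm (Fin k)))
  linarith
end
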